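/- arXiv:2306.10375 — 4 statements merged into one kernel-verified Lean document; each statement's English description precedes it below -/
import Mathlib

section
/- For every graph G, every graph F with minimum degree at least 1, and |V(G)| ≥ |V(F)|, the weak saturation number satisfies wsat(G,F) ≥ min{ |E(G)|, |E(F)| - 1 + (1/2)·min{δ(G), δ(F)-1}·(|V(G)| - |V(F)|) }. -/
open SimpleGraph Finset Filter

/-- `F` has a copy (an injective graph homomorphism image) in `G`. -/
def HasCopy {W V : Type*} (F : SimpleGraph W) (G : SimpleGraph V) : Prop :=
  ∃ f : W ↪ V, ∀ a b, F.Adj a b → G.Adj (f a) (f b)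

/-- Adding the edge `xy` to `H` creates a new copy of `F` containing `xy`. -/
def NewCopyStep {W V : Type*} (F : SimpleGraph W) (H : SimpleGraph V) (x y : V) : Prop :=
  ¬ H.Adj x y ∧
  ∃ f : W ↪ V, ∃ a b : W, F.Adj a b ∧ f a = x ∧ f b = y ∧
    ∀ c d, F.Adj c d → (H ⊔ SimpleGraph.fromEdgeSet {s(x, y)}).Adj (f c) (f d)

/-- The list `l` of edges can be added successively to `H`, each addition creating a
new copy of `F` containing the added edge. -/
def SatProcess {W V : Type*} (F : SimpleGraph W) : SimpleGraph V → List (V × V) → Prop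
  | _, [] => True
  | H, e :: l => NewCopyStep F H e.1 e.2 ∧
      SatProcess F (H ⊔ SimpleGraph.fromEdgeSet {s(e.1, e.2)}) l

/-- The graph obtained from `H` by adding all edges in the list `l`. -/
def addEdges {V : Type*} (H : SimpleGraph V) (l : List (V × V)) : SimpleGraph V :=
  H ⊔ SimpleGraph.fromEdgeSet {e | ∃ p ∈ l, e = s(p.1, p.2)}

/-- `H` is weakly `(G, F)`-saturated. -/
def WeaklySaturated {W V : Type*} (G : SimpleGraph V) (F : SimpleGraph W)
    (H : SimpleGraph V) : Prop :=
  H ≤ G ∧ ¬ HasCopy F H ∧ ∃ l : List (V × V), SatProcess F H l ∧ addEdges H l = G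

/-- The weak saturation number `wsat(G, F)`. -/
noncomputable def wsat {W V : Type*} (G : SimpleGraph V) (F : SimpleGraph W) : ℕ :=
  sInf {m | ∃ H, WeaklySaturated G F H ∧ H.edgeSet.ncard = m}

lemma addEdges_nil {V : Type*} (H : SimpleGraph V) : addEdges H [] = H := by
  simp [addEdges]

lemma addEdges_cons {V : Type*} (H : SimpleGraph V) (e : V × V) (l : List (V × V)) :
    addEdges H (e :: l) = addEdges (H ⊔ SimpleGraph.fromEdgeSet {s(e.1, e.2)}) l := by
  simp only [addEdges, sup_assoc, ← SimpleGraph.fromEdgeSet_union]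
  congr 2
  ext x
  simp only [List.mem_cons, Set.mem_setOf_eq, Set.mem_union, Set.mem_singleton_iff]
  constructor
  · rintro ⟨p, (rfl | hp), rfl⟩
    · exact Or.inl rfl
    · exact Or.inr ⟨p, hp, rfl⟩
  · rintro (rfl | ⟨p, hp, rfl⟩)
    · exact ⟨e, Or.inl rfl, rfl⟩
    · exact ⟨p, Or.inr hp, rfl⟩

lemma addEdges_singleton {V : Type*} (H : SimpleGraph V) (e : V × V) :
    addEdges H [e] = H ⊔ SimpleGraph.fromEdgeSet {s(e.1, e.2)} := by
  rw [addEdges_cons, addEdges_nil]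

lemma addEdges_append {V : Type*} (H : SimpleGraph V) (l₁ l₂ : List (V × V)) :
    addEdges H (l₁ ++ l₂) = addEdges (addEdges H l₁) l₂ := by
  induction l₁ generalizing H with
  | nil => rw [addEdges_nil]; rfl
  | cons e l ih => rw [List.cons_append, addEdges_cons, ih, ← addEdges_cons]

lemma satProcess_append {W V : Type*} (F : SimpleGraph W) (H : SimpleGraph V)
    (l₁ l₂ : List (V × V)) (h₁ : SatProcess F H l₁)
    (h₂ : SatProcess F (addEdges H l₁) l₂) : SatProcess F H (l₁ ++ l₂) := by
  induction l₁ generalizing H with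
  | nil => rw [addEdges_nil] at h₂; exact h₂
  | cons e l ih =>
      obtain ⟨hs, hp⟩ := h₁
      rw [addEdges_cons] at h₂
      exact ⟨hs, ih _ hp h₂⟩

lemma degree_lemma [Finite V] [Fintype W] {F : SimpleGraph W} [DecidableRel F.Adj]
    {H : SimpleGraph V} {x y : V} (hstep : NewCopyStep F H x y) {v : V}
    (hv : v = x ∨ v = y) : (F.minDegree - 1 : ℕ) ≤ (H.neighborSet v).ncard := by
  classical
  obtain ⟨hne, f, a, b, hab, hfa, hfb, hcopy⟩ := hstep
  obtain ⟨c, p, hcp, hfc, hfp⟩ : ∃ c p, F.Adj c p ∧ f c = v ∧ s(x, y) = s(v, f p) := by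
    rcases hv with rfl | rfl
    · exact ⟨a, b, hab, hfa, by rw [hfb]⟩
    · exact ⟨b, a, hab.symm, hfb, by rw [hfa]; exact Sym2.eq_swap⟩
  have key : ∀ d ∈ (F.neighborFinset c).erase p, f d ∈ H.neighborSet v := by
    intro d hd
    rw [Finset.mem_erase, SimpleGraph.mem_neighborFinset] at hd
    obtain ⟨hdp, hcd⟩ := hd
    have hadj := hcopy c d hcd
    rw [hfc] at hadj
    rcases hadj with h | h
    · exact h
    · exfalso
      rw [SimpleGraph.fromEdgeSet_adj, Set.mem_singleton_iff] at h
      have h2 : s(v, f d) = s(v, f p) := by rw [← hfp]; exact h.1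
      exact hdp (f.injective (Sym2.congr_right.mp h2))
  calc F.minDegree - 1 ≤ F.degree c - 1 := by
        have := F.minDegree_le_degree c; omega
    _ = ((F.neighborFinset c).erase p).card := by
        rw [Finset.card_erase_of_mem (by rwa [SimpleGraph.mem_neighborFinset])]; rfl
    _ = (((F.neighborFinset c).erase p).image f).card :=
        (Finset.card_image_of_injective _ f.injective).symm
    _ ≤ (H.neighborSet v).ncard := by
        rw [← Set.ncard_coe_finset]
        refine Set.ncard_le_ncard ?_ (Set.toFinite _)
        intro z hz
        simp only [Finset.coe_image, Set.mem_image, Finset.mem_coe] at hz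
        obtain ⟨d, hd, rfl⟩ := hz
        exact key d hd

lemma process_degree_lemma [Finite V] [Fintype W] (F : SimpleGraph W) [DecidableRel F.Adj] :
    ∀ (l : List (V × V)) (H : SimpleGraph V), SatProcess F H l →
    ∀ v u : V, (addEdges H l).Adj v u → ¬ H.Adj v u →
    (F.minDegree - 1 : ℕ) ≤ (H.neighborSet v).ncard := by
  intro l
  induction l with
  | nil =>
      intro H _ v u hadj hnadj
      rw [addEdges_nil] at hadj
      exact absurd hadj hnadj
  | cons e l ih =>
      intro H hproc v u hadj hnadj
      obtain ⟨hstep, hproc'⟩ := hproc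
      by_cases hv : v = e.1 ∨ v = e.2
      · exact degree_lemma hstep hv
      · push_neg at hv
        have hnotv : ∀ z : V, s(v, z) ≠ s(e.1, e.2) := by
          intro z h
          rw [Sym2.eq_iff] at h
          rcases h with ⟨h1, -⟩ | ⟨h1, -⟩
          · exact hv.1 h1
          · exact hv.2 h1
        have h1 : ¬ (H ⊔ SimpleGraph.fromEdgeSet {s(e.1, e.2)}).Adj v u := by
          rintro (h | h)
          · exact hnadj h
          · rw [SimpleGraph.fromEdgeSet_adj, Set.mem_singleton_iff] at h
            exact hnotv u h.1
        have h2 : (addEdges (H ⊔ SimpleGraph.fromEdgeSet {s(e.1, e.2)}) l).Adj v u := by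
          rw [← addEdges_cons]; exact hadj
        have h3 := ih _ hproc' v u h2 h1
        have h4 : (H ⊔ SimpleGraph.fromEdgeSet {s(e.1, e.2)}).neighborSet v
            = H.neighborSet v := by
          ext z
          simp only [SimpleGraph.mem_neighborSet, SimpleGraph.sup_adj,
            SimpleGraph.fromEdgeSet_adj, Set.mem_singleton_iff]
          constructor
          · rintro (h | h)
            · exact h
            · exact absurd h.1 (hnotv z)
          · exact Or.inl
        rwa [h4] at h3
lemma exists_saturated {W V : Type*} [Fintype V] (F : SimpleGraph W)
    (hedge : ∃ a b, F.Adj a b) (H : SimpleGraph V) :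
    ∃ H' l, H' ≤ H ∧ ¬ HasCopy F H' ∧ SatProcess F H' l ∧ addEdges H' l = H := by
  classical
  obtain ⟨a, b, hab⟩ := hedge
  generalize hn : H.edgeSet.ncard = n
  induction n using Nat.strong_induction_on generalizing H with
  | _ n IH =>
    by_cases hcopy : HasCopy F H
    · obtain ⟨f, hf⟩ := hcopy
      have hxy : H.Adj (f a) (f b) := hf a b hab
      set x := f a with hx
      set y := f b with hy
      set H₂ := H.deleteEdges {s(x, y)} with hH₂
      have hsup : H₂ ⊔ SimpleGraph.fromEdgeSet {s(x, y)} = H := by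
        ext u w
        simp only [SimpleGraph.sup_adj, hH₂, SimpleGraph.deleteEdges_adj,
          SimpleGraph.fromEdgeSet_adj, Set.mem_singleton_iff]
        constructor
        · rintro (⟨h, -⟩ | ⟨h, -⟩)
          · exact h
          · rw [Sym2.eq_iff] at h
            rcases h with ⟨rfl, rfl⟩ | ⟨rfl, rfl⟩
            · exact hxy
            · exact hxy.symm
        · intro h
          by_cases he : s(u, w) = s(x, y)
          · exact Or.inr ⟨he, h.ne⟩
          · exact Or.inl ⟨h, he⟩
      have hmem : s(x, y) ∈ H.edgeSet := hxy
      have hcard : H₂.edgeSet.ncard < n := by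
        rw [← hn, hH₂, SimpleGraph.edgeSet_deleteEdges]
        exact Set.ncard_diff_singleton_lt_of_mem hmem (Set.toFinite _)
      obtain ⟨H', l', hle, hnocopy, hproc, haddeq⟩ := IH _ hcard H₂ rfl
      refine ⟨H', l' ++ [(x, y)], hle.trans (SimpleGraph.deleteEdges_le _),
        hnocopy, ?_, ?_⟩
      · refine satProcess_append F H' l' [(x, y)] hproc ?_
        rw [haddeq]
        refine ⟨⟨?_, f, a, b, hab, rfl, rfl, ?_⟩, trivial⟩
        · rw [hH₂]
          simp [SimpleGraph.deleteEdges_adj]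
        · intro c d hcd
          rw [hsup]
          exact hf c d hcd
      · rw [addEdges_append, haddeq, addEdges_singleton]
        exact hsup
    · exact ⟨H, [], le_refl H, hcopy, trivial, addEdges_nil H⟩

/-- for graphs `G`, `F` with `δ(F) ≥ 1` and `|V(G)| ≥ |V(F)|`,
`wsat(G,F) ≥ min{|E(G)|, |E(F)| - 1 + min{δ(G), δ(F)-1}·(|V(G)|-|V(F)|)/2}`. -/
theorem stmt0 {V W : Type*} [Fintype V] [Fintype W]
    (G : SimpleGraph V) (F : SimpleGraph W)
    [DecidableRel G.Adj] [DecidableRel F.Adj]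
    (hδF : 1 ≤ F.minDegree) (hcard : Fintype.card W ≤ Fintype.card V) :
    min ((G.edgeSet.ncard : ℝ))
      ((F.edgeSet.ncard : ℝ) - 1 +
        (min G.minDegree (F.minDegree - 1) : ℕ) *
          ((Fintype.card V : ℝ) - Fintype.card W) / 2)
      ≤ (wsat G F : ℝ) := by
  classical
  have hWne : Nonempty W := by
    by_contra h
    rw [not_nonempty_iff] at h
    have h0 : F.minDegree = 0 := by
      simp [SimpleGraph.minDegree, Finset.univ_eq_empty]
    omega
  obtain ⟨a₀⟩ := hWne
  have hedge : ∃ a b, F.Adj a b := by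
    have h1 : 1 ≤ F.degree a₀ := le_trans hδF (F.minDegree_le_degree a₀)
    obtain ⟨b, hb⟩ := (F.degree_pos_iff_exists_adj a₀).mp h1
    exact ⟨a₀, b, hb⟩
  obtain ⟨H₀, l₀, hle₀, hnc₀, hproc₀, hadd₀⟩ := exists_saturated F hedge G
  have hSne : {m | ∃ H, WeaklySaturated G F H ∧ H.edgeSet.ncard = m}.Nonempty :=
    ⟨_, H₀, ⟨hle₀, hnc₀, l₀, hproc₀, hadd₀⟩, rfl⟩
  obtain ⟨H, hWS, hHcard⟩ := Nat.sInf_mem hSne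
  have hw : wsat G F = H.edgeSet.ncard := hHcard.symm
  rw [hw]
  obtain ⟨hHG, -, l, hproc, hadd⟩ := hWS
  by_cases hEq : H = G
  · refine le_trans (min_le_left _ _) ?_
    rw [hEq]
  · refine le_trans (min_le_right _ _) ?_
    obtain ⟨e, l', rfl⟩ : ∃ e l', l = e :: l' := by
      cases l with
      | nil => exact absurd (addEdges_nil H ▸ hadd) hEq
      | cons e l' => exact ⟨e, l', rfl⟩
    have hstep := hproc.1
    obtain ⟨hne, f, a, b, hab, hfa, hfb, hcopy⟩ := hstep
    have hHadj : ∀ c d, F.Adj c d → s(c, d) ≠ s(a, b) → H.Adj (f c) (f d) := by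
      intro c d hcd hne'
      rcases hcopy c d hcd with h | h
      · exact h
      · exfalso
        rw [SimpleGraph.fromEdgeSet_adj, Set.mem_singleton_iff] at h
        apply hne'
        apply Sym2.map.injective f.injective
        rw [Sym2.map_pair_eq, Sym2.map_pair_eq, hfa, hfb]
        exact h.1
    set δ' := min G.minDegree (F.minDegree - 1) with hδ'
    set S₁ : Finset (Sym2 V) := (F.edgeFinset.erase s(a, b)).image (Sym2.map f) with hS₁
    have hFE : F.edgeSet.ncard = F.edgeFinset.card := by
      rw [← SimpleGraph.coe_edgeFinset, Set.ncard_coe_finset]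
    have habmem : s(a, b) ∈ F.edgeFinset := by rwa [SimpleGraph.mem_edgeFinset]
    have hS₁card : S₁.card = F.edgeFinset.card - 1 := by
      rw [hS₁, Finset.card_image_of_injective _ (Sym2.map.injective f.injective),
        Finset.card_erase_of_mem habmem]
    have hS₁prop : ∀ t ∈ S₁, t ∈ H.edgeFinset ∧ ∀ z ∈ t, z ∈ Set.range f := by
      intro t ht
      rw [hS₁, Finset.mem_image] at ht
      obtain ⟨t', ht', rfl⟩ := ht
      induction t' using Sym2.ind with
      | _ c d =>
        rw [Finset.mem_erase, SimpleGraph.mem_edgeFinset, SimpleGraph.mem_edgeSet] at ht'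
        have hadjcd : H.Adj (f c) (f d) := hHadj c d ht'.2 ht'.1
        constructor
        · rw [Sym2.map_pair_eq, SimpleGraph.mem_edgeFinset]; exact hadjcd
        · intro z hz
          rw [Sym2.map_pair_eq, Sym2.mem_iff] at hz
          rcases hz with rfl | rfl
          · exact ⟨c, rfl⟩
          · exact ⟨d, rfl⟩
    set T : Finset V := univ.filter (fun v => v ∉ Set.range f) with hT
    have hTcard : T.card = Fintype.card V - Fintype.card W := by
      have h1 : univ.filter (fun v => v ∈ Set.range f) = univ.image f := by
        ext v; simp [eq_comm]
      rw [hT, Finset.filter_not, Finset.card_sdiff_of_subset (Finset.filter_subset _ _), h1,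
        Finset.card_image_of_injective _ f.injective, Finset.card_univ, Finset.card_univ]
    have hdegT : ∀ v ∈ T, δ' ≤ (H.neighborSet v).ncard := by
      intro v hvT
      by_cases hnb : H.neighborSet v = G.neighborSet v
      · refine le_trans (min_le_left _ _) ?_
        rw [hnb]
        have hdeq : (G.neighborSet v).ncard = G.degree v := by
          rw [← SimpleGraph.card_neighborFinset_eq_degree,
            ← Set.ncard_coe_finset (G.neighborFinset v)]
          congr 1
          rw [SimpleGraph.neighborFinset_def, Set.coe_toFinset]
        rw [hdeq]
        exact G.minDegree_le_degree v
      · refine le_trans (min_le_right _ _) ?_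
        have hsub : H.neighborSet v ⊆ G.neighborSet v := fun u hu => hHG hu
        obtain ⟨u, huG, huH⟩ : ∃ u, G.Adj v u ∧ ¬ H.Adj v u := by
          by_contra hc
          push_neg at hc
          exact hnb (Set.Subset.antisymm hsub fun u hu => hc u hu)
        have hadj : (addEdges H (e :: l')).Adj v u := by rw [hadd]; exact huG
        exact process_degree_lemma F (e :: l') H hproc v u hadj huH
    set I : Finset (V × V) := (T ×ˢ univ).filter (fun p => H.Adj p.1 p.2) with hI
    have hnbcard : ∀ v : V,
        (H.neighborSet v).ncard = (univ.filter (fun u => H.Adj v u)).card := by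
      intro v
      rw [← Set.ncard_coe_finset]
      congr 1
      ext u
      simp [SimpleGraph.mem_neighborSet]
    have hIcard : ∑ v ∈ T, (H.neighborSet v).ncard = I.card := by
      rw [Finset.card_eq_sum_card_fiberwise
        (f := Prod.fst) (t := T)
        (fun p hp => by rw [hI, Finset.mem_coe, Finset.mem_filter, Finset.mem_product] at hp; exact hp.1.1)]
      refine Finset.sum_congr rfl fun v hv => ?_
      rw [hnbcard v]
      have hfib : I.filter (fun p => p.1 = v)
          = ({v} : Finset V) ×ˢ (univ.filter (fun u => H.Adj v u)) := by
        ext ⟨p1, p2⟩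
        simp only [hI, Finset.mem_filter, Finset.mem_product, Finset.mem_singleton,
          Finset.mem_univ, true_and, and_true]
        constructor
        · rintro ⟨⟨-, h⟩, rfl⟩; exact ⟨rfl, h⟩
        · rintro ⟨rfl, h⟩; exact ⟨⟨hv, h⟩, rfl⟩
      rw [hfib, Finset.card_product, Finset.card_singleton, one_mul]
    have hIle : I.card ≤ 2 * (I.image (fun p => s(p.1, p.2))).card := by
      apply Finset.card_le_mul_card_image
      intro t ht
      induction t using Sym2.ind with
      | _ x y =>
        have hsub2 : I.filter (fun p => s(p.1, p.2) = s(x, y))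
            ⊆ ({(x, y), (y, x)} : Finset (V × V)) := by
          intro p hp
          rw [Finset.mem_filter, Sym2.eq_iff] at hp
          rcases hp.2 with ⟨h1, h2⟩ | ⟨h1, h2⟩
          · simp [Prod.ext_iff, h1, h2]
          · simp [Prod.ext_iff, h1, h2]
        exact le_trans (Finset.card_le_card hsub2)
          (le_trans (Finset.card_insert_le _ _) (by simp))
    have himgsub : I.image (fun p => s(p.1, p.2)) ⊆ H.edgeFinset \ S₁ := by
      intro t ht
      rw [Finset.mem_image] at ht
      obtain ⟨p, hp, rfl⟩ := ht
      rw [hI, Finset.mem_filter, Finset.mem_product] at hp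
      rw [Finset.mem_sdiff]
      constructor
      · rw [SimpleGraph.mem_edgeFinset]; exact hp.2
      · intro hmem
        have hr := (hS₁prop _ hmem).2 p.1 (Sym2.mem_mk_left _ _)
        have hp1 : p.1 ∈ T := hp.1.1
        rw [hT, Finset.mem_filter] at hp1
        exact hp1.2 hr
    have hS₁sub : S₁ ⊆ H.edgeFinset := fun t ht => (hS₁prop t ht).1
    have hchain : δ' * (Fintype.card V - Fintype.card W) + 2 * S₁.card
        ≤ 2 * H.edgeFinset.card := by
      have h1 : δ' * T.card ≤ ∑ v ∈ T, (H.neighborSet v).ncard := by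
        calc δ' * T.card = ∑ _v ∈ T, δ' := by rw [Finset.sum_const, smul_eq_mul, mul_comm]
          _ ≤ _ := Finset.sum_le_sum hdegT
      rw [hTcard] at h1
      have h2 : (I.image (fun p => s(p.1, p.2))).card ≤ H.edgeFinset.card - S₁.card := by
        calc _ ≤ (H.edgeFinset \ S₁).card := Finset.card_le_card himgsub
          _ = _ := Finset.card_sdiff_of_subset hS₁sub
      have h3 := Finset.card_le_card hS₁sub
      set A := δ' * (Fintype.card V - Fintype.card W) with hA
      omega
    have hFpos : 1 ≤ F.edgeFinset.card := Finset.card_pos.mpr ⟨_, habmem⟩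
    have hHE : H.edgeSet.ncard = H.edgeFinset.card := by
      rw [← SimpleGraph.coe_edgeFinset, Set.ncard_coe_finset]
    rw [hFE, hHE]
    rw [hS₁card] at hchain
    have hcast := (Nat.cast_le (α := ℝ)).mpr hchain
    push_cast [Nat.cast_sub hcard, Nat.cast_sub hFpos] at hcast
    linarith
end

section
/- Let F be a graph with s vertices and minimum degree δ ≥ 1. Then for all integers n ≥ m ≥ s - 1, wsat(K_n, F) ≤ (δ-1)(n-m) + wsat(K_m, F). -/
open SimpleGraph Finset Filter

namespace Stmt2Aux

variable {W V : Type*}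

/-- The single-edge graph. -/
abbrev sgl {V : Type*} (x y : V) : SimpleGraph V := SimpleGraph.fromEdgeSet {s(x, y)}

lemma sgl_adj {x y u w : V} : (sgl x y).Adj u w ↔ s(u, w) = s(x, y) ∧ u ≠ w := by
  simp [fromEdgeSet_adj]

/-- Fold of edge additions. -/
def fold {V : Type*} : SimpleGraph V → List (V × V) → SimpleGraph V
  | H, [] => H
  | H, p :: l => fold (H ⊔ sgl p.1 p.2) l

lemma satProcess_append {F : SimpleGraph W} :
    ∀ (l₁ l₂ : List (V × V)) (H : SimpleGraph V), SatProcess F H l₁ →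
      SatProcess F (fold H l₁) l₂ → SatProcess F H (l₁ ++ l₂)
  | [], l₂, H, _, h₂ => h₂
  | p :: l₁, l₂, H, h₁, h₂ =>
    ⟨h₁.1, satProcess_append l₁ l₂ _ h₁.2 h₂⟩

lemma addEdges_eq_fold : ∀ (l : List (V × V)) (H : SimpleGraph V), addEdges H l = fold H l
  | [], H => by
      simp only [addEdges, fold]
      have : {e : Sym2 V | ∃ p ∈ ([] : List (V × V)), e = s(p.1, p.2)} = ∅ := by
        ext e; simp
      rw [this, fromEdgeSet_empty, sup_bot_eq]
  | p :: l, H => by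
      have h1 : {e : Sym2 V | ∃ q ∈ (p :: l), e = s(q.1, q.2)} =
          {s(p.1, p.2)} ∪ {e : Sym2 V | ∃ q ∈ l, e = s(q.1, q.2)} := by
        ext e; simp [List.mem_cons, or_and_right, exists_or]
      rw [fold, ← addEdges_eq_fold l, addEdges, addEdges, h1, fromEdgeSet_union, ← sup_assoc]

lemma fold_append : ∀ (l₁ l₂ : List (V × V)) (H : SimpleGraph V),
    fold H (l₁ ++ l₂) = fold (fold H l₁) l₂
  | [], l₂, H => rfl
  | p :: l₁, l₂, H => fold_append l₁ l₂ _

lemma map_sup (f : V ↪ W) (G₁ G₂ : SimpleGraph V) :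
    (G₁ ⊔ G₂).map f = G₁.map f ⊔ G₂.map f := by
  ext u w
  simp only [map_adj, sup_adj]
  constructor
  · rintro ⟨a, b, (h | h), rfl, rfl⟩
    · exact Or.inl ⟨a, b, h, rfl, rfl⟩
    · exact Or.inr ⟨a, b, h, rfl, rfl⟩
  · rintro (⟨a, b, h, rfl, rfl⟩ | ⟨a, b, h, rfl, rfl⟩)
    · exact ⟨a, b, Or.inl h, rfl, rfl⟩
    · exact ⟨a, b, Or.inr h, rfl, rfl⟩

lemma map_sgl (f : V ↪ W) (x y : V) : (sgl x y).map f = sgl (f x) (f y) := by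
  ext u w
  simp only [map_adj, sgl_adj]
  constructor
  · rintro ⟨a, b, ⟨hab, hne⟩, rfl, rfl⟩
    rcases Sym2.eq_iff.1 hab with ⟨rfl, rfl⟩ | ⟨rfl, rfl⟩
    · exact ⟨rfl, f.injective.ne hne⟩
    · exact ⟨Sym2.eq_swap, f.injective.ne hne⟩
  · rintro ⟨hab, hne⟩
    rcases Sym2.eq_iff.1 hab with ⟨hx, hy⟩ | ⟨hx, hy⟩
    · exact ⟨x, y, ⟨rfl, fun h => hne (by rw [hx, hy, h])⟩, hx.symm, hy.symm⟩
    · exact ⟨y, x, ⟨Sym2.eq_swap, fun h => hne (by rw [hx, hy, h])⟩, hx.symm, hy.symm⟩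

section Star

variable {n : ℕ}

/-- `castSucc` as an embedding (local abbreviation). -/
abbrev cE (n : ℕ) : Fin n ↪ Fin (n + 1) := Fin.castSuccEmb

/-- The star graph on `Fin (n+1)` joining `Fin.last n` to `castSucc d` for `d ∈ S`. -/
def star (n : ℕ) (S : Finset (Fin n)) : SimpleGraph (Fin (n + 1)) :=
  SimpleGraph.fromEdgeSet ((fun d : Fin n => s(Fin.last n, Fin.castSucc d)) '' ↑S)

lemma cast_ne_last (x : Fin n) : Fin.castSucc x ≠ Fin.last n := (Fin.castSucc_lt_last x).ne

lemma star_adj {S : Finset (Fin n)} {x y : Fin (n + 1)} :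
    (star n S).Adj x y ↔ (x = Fin.last n ∧ ∃ d ∈ S, y = Fin.castSucc d) ∨
      (y = Fin.last n ∧ ∃ d ∈ S, x = Fin.castSucc d) := by
  rw [star, fromEdgeSet_adj]
  constructor
  · rintro ⟨he, hne⟩
    obtain ⟨d, hd, hde⟩ := he
    rcases Sym2.eq_iff.1 hde with ⟨h1, h2⟩ | ⟨h1, h2⟩
    · exact Or.inl ⟨h1.symm, d, hd, h2.symm⟩
    · exact Or.inr ⟨h1.symm, d, hd, h2.symm⟩
  · rintro (⟨rfl, d, hd, rfl⟩ | ⟨rfl, d, hd, rfl⟩)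
    · exact ⟨⟨d, hd, rfl⟩, (cast_ne_last d).symm⟩
    · exact ⟨⟨d, hd, Sym2.eq_swap⟩, cast_ne_last d⟩

lemma star_not_adj_cast {S : Finset (Fin n)} {x y : Fin n} :
    ¬ (star n S).Adj x.castSucc y.castSucc := by
  rw [star_adj]
  rintro (⟨h, -⟩ | ⟨h, -⟩) <;> exact cast_ne_last _ h

lemma lift_adj {H : SimpleGraph (Fin n)} {S : Finset (Fin n)} {x y : Fin n} :
    (H.map (cE n) ⊔ star n S).Adj x.castSucc y.castSucc ↔ H.Adj x y := by
  rw [sup_adj]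
  constructor
  · rintro (h | h)
    · exact map_adj_apply.1 h
    · exact absurd h star_not_adj_cast
  · exact fun h => Or.inl (map_adj_apply.2 h)

lemma lift_sup_sgl {H : SimpleGraph (Fin n)} {S : Finset (Fin n)} (x y : Fin n) :
    (H.map (cE n) ⊔ star n S) ⊔ sgl x.castSucc y.castSucc =
      (H ⊔ sgl x y).map (cE n) ⊔ star n S := by
  rw [map_sup, map_sgl]
  exact sup_right_comm _ _ _

lemma newCopyStep_lift {s : ℕ} {F : SimpleGraph (Fin s)} {H : SimpleGraph (Fin n)}
    {S : Finset (Fin n)} {x y : Fin n} (h : NewCopyStep F H x y) :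
    NewCopyStep F (H.map (cE n) ⊔ star n S) x.castSucc y.castSucc := by
  obtain ⟨hna, f, a, b, hab, hfa, hfb, hadj⟩ := h
  refine ⟨fun hc => hna (lift_adj.1 hc), f.trans (cE n), a, b, hab, ?_, ?_, ?_⟩
  · exact congrArg Fin.castSucc hfa
  · exact congrArg Fin.castSucc hfb
  · intro c d hcd
    have := hadj c d hcd
    show ((H.map (cE n) ⊔ star n S) ⊔ sgl x.castSucc y.castSucc).Adj
      (Fin.castSucc (f c)) (Fin.castSucc (f d))
    rw [lift_sup_sgl]
    exact Or.inl (map_adj_apply.2 this)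

lemma satProcess_lift {s : ℕ} {F : SimpleGraph (Fin s)} {S : Finset (Fin n)} :
    ∀ (l : List (Fin n × Fin n)) (H : SimpleGraph (Fin n)), SatProcess F H l →
      SatProcess F (H.map (cE n) ⊔ star n S)
        (l.map fun p => (Fin.castSucc p.1, Fin.castSucc p.2))
  | [], H, _ => trivial
  | p :: l, H, h => by
      refine ⟨newCopyStep_lift h.1, ?_⟩
      show SatProcess F ((H.map (cE n) ⊔ star n S) ⊔ sgl p.1.castSucc p.2.castSucc) _
      rw [lift_sup_sgl]
      exact satProcess_lift l _ h.2

lemma fold_lift {S : Finset (Fin n)} :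
    ∀ (l : List (Fin n × Fin n)) (H : SimpleGraph (Fin n)),
      fold (H.map (cE n) ⊔ star n S) (l.map fun p => (Fin.castSucc p.1, Fin.castSucc p.2)) =
        (fold H l).map (cE n) ⊔ star n S
  | [], H => rfl
  | p :: l, H => by
      show fold ((H.map (cE n) ⊔ star n S) ⊔ sgl p.1.castSucc p.2.castSucc) _ = _
      rw [lift_sup_sgl]
      exact fold_lift l _

lemma star_insert {S : Finset (Fin n)} {u : Fin n} :
    star n (insert u S) = star n S ⊔ sgl (Fin.last n) u.castSucc := by
  rw [star, star, coe_insert, Set.image_insert_eq, Set.insert_eq, fromEdgeSet_union, sup_comm]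

lemma map_top_sup_star_univ : (⊤ : SimpleGraph (Fin n)).map (cE n) ⊔ star n univ = ⊤ := by
  ext x y
  simp only [sup_adj, top_adj]
  constructor
  · rintro (h | h)
    · exact h.ne
    · exact h.ne
  · intro hne
    by_cases hx : x = Fin.last n
    · have hy : y ≠ Fin.last n := fun h => hne (hx.trans h.symm)
      exact Or.inr (star_adj.2 (Or.inl ⟨hx, y.castPred hy, mem_univ _,
        (Fin.castSucc_castPred y hy).symm⟩))
    · by_cases hy : y = Fin.last n
      · exact Or.inr (star_adj.2 (Or.inr ⟨hy, x.castPred hx, mem_univ _,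
          (Fin.castSucc_castPred x hx).symm⟩))
      · refine Or.inl ((map_adj _ _ _ _).2 ⟨x.castPred hx, y.castPred hy, ?_, Fin.castSucc_castPred x hx,
          Fin.castSucc_castPred y hy⟩)
        simp only [top_adj]
        intro h
        exact hne (by rw [← Fin.castSucc_castPred x hx, ← Fin.castSucc_castPred y hy, h])

end Star

section Embed

lemma inj_of_card_le {α β : Type*} [DecidableEq α] [Nonempty β]
    (A : Finset α) (B : Finset β) (h : A.card ≤ B.card) :
    ∃ g : α → β, Set.InjOn g ↑A ∧ ∀ a ∈ A, g a ∈ B := by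
  classical
  have hcard : Fintype.card ↥A ≤ Fintype.card ↥B := by simpa [Fintype.card_coe] using h
  obtain ⟨e⟩ := Function.Embedding.nonempty_of_card_le hcard
  refine ⟨fun x => if hx : x ∈ A then (e ⟨x, hx⟩ : β) else Classical.arbitrary β, ?_, ?_⟩
  · intro x hx y hy hxy
    rw [Finset.mem_coe] at hx hy
    simp only [dif_pos hx, dif_pos hy] at hxy
    have := e.injective (Subtype.coe_injective hxy)
    exact congrArg Subtype.val this
  · intro a ha
    simp only [dif_pos ha]
    exact (e ⟨a, ha⟩).2

variable {s n : ℕ} {F : SimpleGraph (Fin s)} [DecidableRel F.Adj]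

lemma exists_embed (hn : s - 1 ≤ n) {a₀ b₀ : Fin s} (hab : F.Adj a₀ b₀)
    {D : Finset (Fin n)} (hD : (F.neighborFinset a₀).card = D.card + 1) {u : Fin n}
    (hu : u ∉ D) :
    ∃ f : Fin s ↪ Fin (n + 1), f a₀ = Fin.last n ∧ f b₀ = u.castSucc ∧
      (∀ x, x ≠ a₀ → ∃ z : Fin n, f x = z.castSucc) ∧
      (∀ x ∈ F.neighborFinset a₀, x ≠ b₀ → ∃ d ∈ D, f x = d.castSucc) := by
  classical
  set N := F.neighborFinset a₀ with hN
  have hb₀N : b₀ ∈ N := (F.mem_neighborFinset a₀ b₀).2 hab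
  have ha₀N : a₀ ∉ N := fun h => F.irrefl ((F.mem_neighborFinset a₀ a₀).1 h)
  have hs2 : 2 ≤ s := by
    have : 1 < Fintype.card (Fin s) := Fintype.one_lt_card_iff_nontrivial.2 ⟨⟨a₀, b₀, hab.ne⟩⟩
    simp at this; omega
  have hn1 : 1 ≤ n := le_trans (by omega) hn
  haveI : Nonempty (Fin n) := ⟨⟨0, by omega⟩⟩
  -- injection from N.erase b₀ into D
  obtain ⟨g1, hg1inj, hg1mem⟩ := inj_of_card_le (N.erase b₀) D
    (by rw [card_erase_of_mem hb₀N, hD]; omega)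
  -- injection from the rest into the rest
  have hcard2 : (univ \ insert a₀ N).card ≤ (univ \ insert u D).card := by
    rw [card_sdiff_of_subset (subset_univ _), card_sdiff_of_subset (subset_univ _), card_insert_of_notMem ha₀N,
      card_insert_of_notMem hu, card_univ, card_univ, Fintype.card_fin, Fintype.card_fin, hD]
    omega
  obtain ⟨g2, hg2inj, hg2mem⟩ := inj_of_card_le (univ \ insert a₀ N) (univ \ insert u D) hcard2
  set φ : Fin s → Fin (n + 1) := fun x =>
    if x = a₀ then Fin.last n
    else if x = b₀ then u.castSucc
    else if x ∈ N then (g1 x).castSucc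
    else (g2 x).castSucc with hφ
  have hval : ∀ x, x ≠ a₀ → x ≠ b₀ → x ∈ N → φ x = (g1 x).castSucc ∧ g1 x ∈ D := by
    intro x hx1 hx2 hx3
    refine ⟨by simp only [hφ, if_neg hx1, if_neg hx2, if_pos hx3], hg1mem x (mem_erase.2 ⟨hx2, hx3⟩)⟩
  have hval2 : ∀ x, x ≠ a₀ → x ≠ b₀ → x ∉ N → φ x = (g2 x).castSucc ∧ g2 x ≠ u ∧ g2 x ∉ D := by
    intro x hx1 hx2 hx3
    have hx : x ∈ univ \ insert a₀ N := by
      rw [Finset.mem_sdiff, mem_insert]; exact ⟨mem_univ _, by tauto⟩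
    have := hg2mem x hx
    rw [Finset.mem_sdiff, mem_insert] at this
    refine ⟨by simp only [hφ, if_neg hx1, if_neg hx2, if_neg hx3], fun h => this.2 (Or.inl h),
      fun h => this.2 (Or.inr h)⟩
  have hba : b₀ ≠ a₀ := hab.ne'
  have pa : φ a₀ = Fin.last n := by simp [hφ]
  have pb : φ b₀ = u.castSucc := by simp [hφ, hba]
  -- classification of non-a₀ values
  have pc : ∀ x, x ≠ a₀ → ∃ z : Fin n, φ x = z.castSucc := by
    intro x hx
    by_cases hxb : x = b₀
    · exact ⟨u, by rw [hxb, pb]⟩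
    · by_cases hxN : x ∈ N
      · exact ⟨g1 x, (hval x hx hxb hxN).1⟩
      · exact ⟨g2 x, (hval2 x hx hxb hxN).1⟩
  have hinj : Function.Injective φ := by
    intro x y hxy
    by_cases hx : x = a₀
    · by_cases hy : y = a₀
      · rw [hx, hy]
      · obtain ⟨z, hz⟩ := pc y hy
        rw [hx, pa, hz] at hxy
        exact absurd hxy.symm (cast_ne_last z)
    · by_cases hy : y = a₀
      · obtain ⟨z, hz⟩ := pc x hx
        rw [hy, pa, hz] at hxy
        exact absurd hxy (cast_ne_last z)
      · -- both ≠ a₀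
        by_cases hxb : x = b₀
        · by_cases hyb : y = b₀
          · rw [hxb, hyb]
          · exfalso
            rw [hxb, pb] at hxy
            by_cases hyN : y ∈ N
            · obtain ⟨hval, hmem⟩ := hval y hy hyb hyN
              rw [hval] at hxy
              exact hu (Fin.castSucc_injective n hxy ▸ hmem)
            · obtain ⟨hval, hne, -⟩ := hval2 y hy hyb hyN
              rw [hval] at hxy
              exact hne (Fin.castSucc_injective n hxy).symm
        · by_cases hyb : y = b₀
          · exfalso
            rw [hyb, pb] at hxy
            by_cases hxN : x ∈ N
            · obtain ⟨hval, hmem⟩ := hval x hx hxb hxN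
              rw [hval] at hxy
              exact hu (Fin.castSucc_injective n hxy.symm ▸ hmem)
            · obtain ⟨hval, hne, -⟩ := hval2 x hx hxb hxN
              rw [hval] at hxy
              exact hne (Fin.castSucc_injective n hxy.symm).symm
          · by_cases hxN : x ∈ N <;> by_cases hyN : y ∈ N
            · obtain ⟨hv1, -⟩ := hval x hx hxb hxN
              obtain ⟨hv2, -⟩ := hval y hy hyb hyN
              rw [hv1, hv2] at hxy
              exact hg1inj (Finset.mem_coe.2 (mem_erase.2 ⟨hxb, hxN⟩))
                (Finset.mem_coe.2 (mem_erase.2 ⟨hyb, hyN⟩)) (Fin.castSucc_injective n hxy)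
            · exfalso
              obtain ⟨hv1, hm1⟩ := hval x hx hxb hxN
              obtain ⟨hv2, -, hm2⟩ := hval2 y hy hyb hyN
              rw [hv1, hv2] at hxy
              exact hm2 (Fin.castSucc_injective n hxy ▸ hm1)
            · exfalso
              obtain ⟨hv1, -, hm1⟩ := hval2 x hx hxb hxN
              obtain ⟨hv2, hm2⟩ := hval y hy hyb hyN
              rw [hv1, hv2] at hxy
              exact hm1 (Fin.castSucc_injective n hxy.symm ▸ hm2)
            · obtain ⟨hv1, -, -⟩ := hval2 x hx hxb hxN
              obtain ⟨hv2, -, -⟩ := hval2 y hy hyb hyN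
              rw [hv1, hv2] at hxy
              refine hg2inj ?_ ?_ (Fin.castSucc_injective n hxy)
              · simp only [coe_sdiff, Set.mem_diff, Finset.coe_insert, Set.mem_insert_iff,
                  coe_univ, Set.mem_univ, true_and, mem_coe]
                tauto
              · simp only [coe_sdiff, Set.mem_diff, Finset.coe_insert, Set.mem_insert_iff,
                  coe_univ, Set.mem_univ, true_and, mem_coe]
                tauto
  refine ⟨⟨φ, hinj⟩, pa, pb, pc, ?_⟩
  intro x hxN hxb
  have hxa : x ≠ a₀ := fun h => ha₀N (h ▸ hxN)
  obtain ⟨hv, hm⟩ := hval x hxa hxb hxN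
  exact ⟨g1 x, hm, hv⟩

end Embed

section Phase2

variable {s n : ℕ} {F : SimpleGraph (Fin s)} [DecidableRel F.Adj]

lemma newCopy_star (hn : s - 1 ≤ n) {a₀ b₀ : Fin s} (hab : F.Adj a₀ b₀)
    {D S : Finset (Fin n)} (hDS : D ⊆ S) (hD : (F.neighborFinset a₀).card = D.card + 1)
    {u : Fin n} (hu : u ∉ S) :
    NewCopyStep F ((⊤ : SimpleGraph (Fin n)).map (cE n) ⊔ star n S)
      (Fin.last n) u.castSucc := by
  have huD : u ∉ D := fun h => hu (hDS h)
  obtain ⟨f, pa, pb, pc, pd⟩ := exists_embed hn hab hD huD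
  constructor
  · rintro (h | h)
    · obtain ⟨x', y', -, hx, -⟩ := (map_adj _ _ _ _).1 h
      exact cast_ne_last x' hx
    · rcases star_adj.1 h with ⟨-, d, hd, hy⟩ | ⟨h1, -⟩
      · exact hu (Fin.castSucc_injective n hy ▸ hd)
      · exact cast_ne_last u h1
  · refine ⟨f, a₀, b₀, hab, pa, pb, ?_⟩
    have key : ∀ c d : Fin s, F.Adj c d → c = a₀ →
        (((⊤ : SimpleGraph (Fin n)).map (cE n) ⊔ star n S) ⊔
          sgl (Fin.last n) u.castSucc).Adj (f c) (f d) := by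
      intro c d hcd hc
      subst hc
      have hdN : d ∈ F.neighborFinset c := (F.mem_neighborFinset c d).2 hcd
      by_cases hdb : d = b₀
      · subst hdb
        rw [pa, pb]
        exact Or.inr (sgl_adj.2 ⟨rfl, (cast_ne_last u).symm⟩)
      · obtain ⟨e, he, hfe⟩ := pd d hdN hdb
        rw [pa, hfe]
        exact Or.inl (Or.inr (star_adj.2 (Or.inl ⟨rfl, e, hDS he, rfl⟩)))
    intro c d hcd
    by_cases hc : c = a₀
    · exact key c d hcd hc
    · by_cases hd : d = a₀
      · exact (key d c hcd.symm hd).symm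
      · obtain ⟨zc, hzc⟩ := pc c hc
        obtain ⟨zd, hzd⟩ := pc d hd
        rw [hzc, hzd]
        refine Or.inl (Or.inl ((map_adj _ _ _ _).2 ⟨zc, zd, ?_, rfl, rfl⟩))
        simp only [top_adj]
        intro h
        exact hcd.ne (f.injective (by rw [hzc, hzd, h]))

lemma satProcess_star (hn : s - 1 ≤ n) {a₀ b₀ : Fin s} (hab : F.Adj a₀ b₀)
    {D : Finset (Fin n)} (hD : (F.neighborFinset a₀).card = D.card + 1) :
    ∀ (r : List (Fin n)) (S : Finset (Fin n)), r.Nodup → (∀ u ∈ r, u ∉ S) → D ⊆ S →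
      SatProcess F ((⊤ : SimpleGraph (Fin n)).map (cE n) ⊔ star n S)
        (r.map fun u => (Fin.last n, u.castSucc))
  | [], S, _, _, _ => trivial
  | u :: r, S, hnd, hmem, hDS => by
      refine ⟨newCopy_star hn hab hDS hD (hmem u List.mem_cons_self), ?_⟩
      show SatProcess F (((⊤ : SimpleGraph (Fin n)).map (cE n) ⊔ star n S) ⊔
        sgl (Fin.last n) u.castSucc) _
      rw [sup_assoc, ← star_insert]
      refine satProcess_star hn hab hD r (insert u S) (List.nodup_cons.1 hnd).2 ?_
        (hDS.trans (subset_insert u S))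
      intro w hw
      rw [mem_insert]
      rintro (rfl | hwS)
      · exact (List.nodup_cons.1 hnd).1 hw
      · exact hmem w (List.mem_cons_of_mem u hw) hwS

lemma fold_star :
    ∀ (r : List (Fin n)) (S : Finset (Fin n)),
      fold ((⊤ : SimpleGraph (Fin n)).map (cE n) ⊔ star n S)
        (r.map fun u => (Fin.last n, u.castSucc)) =
      (⊤ : SimpleGraph (Fin n)).map (cE n) ⊔ star n (S ∪ r.toFinset)
  | [], S => by simp [fold]
  | u :: r, S => by
      show fold (((⊤ : SimpleGraph (Fin n)).map (cE n) ⊔ star n S) ⊔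
        sgl (Fin.last n) u.castSucc) _ = _
      rw [sup_assoc, ← star_insert, fold_star r (insert u S)]
      congr 1
      congr 1
      ext a
      simp only [mem_union, mem_insert, List.toFinset_cons]
      tauto

end Phase2

section NoCopy

variable {s n : ℕ} {F : SimpleGraph (Fin s)} [DecidableRel F.Adj]

lemma noCopy_lift (hδ : 1 ≤ F.minDegree) {H : SimpleGraph (Fin n)} (hH : ¬ HasCopy F H)
    {D : Finset (Fin n)} (hD : D.card = F.minDegree - 1) :
    ¬ HasCopy F (H.map (cE n) ⊔ star n D) := by
  classical
  rintro ⟨f, hf⟩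
  haveI : Nonempty (Fin s) := by
    rcases Nat.eq_zero_or_pos s with rfl | h
    · exfalso
      have : F.minDegree = 0 := by
        simp [SimpleGraph.minDegree]
      omega
    · exact ⟨⟨0, h⟩⟩
  have hlast : ∀ x : Fin s, f x ≠ Fin.last n := by
    intro x hx
    have himg : (F.neighborFinset x).image f ⊆ D.image Fin.castSucc := by
      intro w hw
      obtain ⟨y, hy, rfl⟩ := Finset.mem_image.1 hw
      have hadj := hf x y ((F.mem_neighborFinset x y).1 hy)
      rw [hx] at hadj
      rcases hadj with h | h
      · obtain ⟨x', y', -, hx', -⟩ := (map_adj _ _ _ _).1 h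
        exact absurd hx' (cast_ne_last x')
      · rcases star_adj.1 h with ⟨-, d, hd, hy'⟩ | ⟨-, d, -, hd⟩
        · exact Finset.mem_image.2 ⟨d, hd, hy'.symm⟩
        · exact absurd hd.symm (cast_ne_last d)
    have h1 : (F.neighborFinset x).card ≤ D.card := by
      calc (F.neighborFinset x).card = ((F.neighborFinset x).image f).card :=
            (Finset.card_image_of_injective _ f.injective).symm
        _ ≤ (D.image Fin.castSucc).card := Finset.card_le_card himg
        _ ≤ D.card := Finset.card_image_le
    have h2 : F.minDegree ≤ F.degree x := F.minDegree_le_degree x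
    rw [SimpleGraph.degree] at h2
    omega
  refine hH ⟨⟨fun x => (f x).castPred (hlast x), ?_⟩, ?_⟩
  · intro x y hxy
    have h2 : ((f x).castPred (hlast x)).castSucc = ((f y).castPred (hlast y)).castSucc :=
      congrArg Fin.castSucc hxy
    rw [Fin.castSucc_castPred, Fin.castSucc_castPred] at h2
    exact f.injective h2
  · intro a b hab
    have := hf a b hab
    rw [← Fin.castSucc_castPred (f a) (hlast a), ← Fin.castSucc_castPred (f b) (hlast b)] at this
    exact lift_adj.1 this

lemma edgeSet_map_eq {H : SimpleGraph (Fin n)} :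
    (H.map (cE n)).edgeSet = Sym2.map (cE n) '' H.edgeSet := by
  ext e
  induction e using Sym2.ind with
  | _ x y =>
    simp only [mem_edgeSet, map_adj, Set.mem_image]
    constructor
    · rintro ⟨a, b, h, rfl, rfl⟩
      exact ⟨s(a, b), h, rfl⟩
    · rintro ⟨e', he', hee⟩
      induction e' using Sym2.ind with
      | _ a b =>
        rw [Sym2.map_pair_eq, Sym2.eq_iff] at hee
        rcases hee with ⟨h1, h2⟩ | ⟨h1, h2⟩
        · exact ⟨a, b, he', h1, h2⟩
        · exact ⟨b, a, he'.symm, h2, h1⟩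

lemma ncard_lift_le {H : SimpleGraph (Fin n)} {D : Finset (Fin n)} :
    (H.map (cE n) ⊔ star n D).edgeSet.ncard ≤ H.edgeSet.ncard + D.card := by
  rw [edgeSet_sup]
  refine le_trans (Set.ncard_union_le _ _) (Nat.add_le_add ?_ ?_)
  · rw [edgeSet_map_eq, Set.ncard_image_of_injective _ (Sym2.map.injective (cE n).injective)]
  · calc (star n D).edgeSet.ncard
        ≤ ((fun d : Fin n => s(Fin.last n, Fin.castSucc d)) '' ↑D).ncard := by
          refine Set.ncard_le_ncard ?_ (Set.toFinite _)
          rw [star, edgeSet_fromEdgeSet]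
          exact Set.diff_subset
      _ ≤ (↑D : Set (Fin n)).ncard := Set.ncard_image_le (Set.toFinite _)
      _ = D.card := Set.ncard_coe_finset D

end NoCopy

section Main

variable {s : ℕ} {F : SimpleGraph (Fin s)} [DecidableRel F.Adj]

lemma s_ge_two (hδ : 1 ≤ F.minDegree) : 2 ≤ s := by
  by_contra h
  push_neg at h
  interval_cases s
  · have : F.minDegree = 0 := by simp [SimpleGraph.minDegree]
    omega
  · have h0 : F.degree 0 = 0 := by
      rw [SimpleGraph.degree, Finset.card_eq_zero]
      ext y
      simp only [mem_neighborFinset, Finset.notMem_empty, iff_false]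
      intro hy
      exact hy.ne (Subsingleton.elim _ _)
    have := F.minDegree_le_degree 0
    omega

/-- The key step: extending a weakly saturated graph from `Fin n` to `Fin (n+1)`. -/
lemma step_lemma (hδ : 1 ≤ F.minDegree) {n : ℕ} (hn : s - 1 ≤ n) {H : SimpleGraph (Fin n)}
    (hH : WeaklySaturated (⊤ : SimpleGraph (Fin n)) F H) :
    ∃ H' : SimpleGraph (Fin (n + 1)), WeaklySaturated (⊤ : SimpleGraph (Fin (n + 1))) F H' ∧
      H'.edgeSet.ncard ≤ H.edgeSet.ncard + (F.minDegree - 1) := by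
  classical
  have hs2 : 2 ≤ s := s_ge_two hδ
  haveI : Nonempty (Fin s) := ⟨⟨0, by omega⟩⟩
  obtain ⟨a₀, ha₀⟩ := F.exists_minimal_degree_vertex
  have hdeg : (F.neighborFinset a₀).card = F.minDegree := by
    rw [← SimpleGraph.degree, ← ha₀]
  have hdlt : F.degree a₀ < s := by
    have := F.degree_lt_card_verts a₀
    simpa using this
  have hdn : F.minDegree - 1 ≤ n := by
    rw [← ha₀] at *
    omega
  obtain ⟨D, -, hDcard⟩ := Finset.exists_subset_card_eq
    (show F.minDegree - 1 ≤ (univ : Finset (Fin n)).card by simpa using hdn)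
  have hD : (F.neighborFinset a₀).card = D.card + 1 := by rw [hdeg, hDcard]; omega
  obtain ⟨b₀, hb₀⟩ : ∃ b₀, b₀ ∈ F.neighborFinset a₀ := by
    apply Finset.card_pos.1
    omega
  have hab : F.Adj a₀ b₀ := (F.mem_neighborFinset a₀ b₀).1 hb₀
  obtain ⟨-, hnc, l, hproc, hadd⟩ := hH
  have hfold : fold H l = ⊤ := by rw [← addEdges_eq_fold]; exact hadd
  refine ⟨H.map (cE n) ⊔ star n D, ⟨le_top, noCopy_lift hδ hnc hDcard, ?_⟩,
    le_trans ncard_lift_le (by omega)⟩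
  refine ⟨(l.map fun p => (Fin.castSucc p.1, Fin.castSucc p.2)) ++
    ((univ \ D).toList.map fun u => (Fin.last n, Fin.castSucc u)), ?_, ?_⟩
  · apply satProcess_append
    · exact satProcess_lift l H hproc
    · rw [fold_lift, hfold]
      refine satProcess_star hn hab hD _ D (Finset.nodup_toList _) ?_ (subset_refl D)
      intro u hu
      have := Finset.mem_toList.1 hu
      rw [Finset.mem_sdiff] at this
      exact this.2
  · rw [addEdges_eq_fold, fold_append, fold_lift, hfold, fold_star]
    have : D ∪ (univ \ D).toList.toFinset = univ := by
      rw [Finset.toList_toFinset]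
      exact Finset.union_sdiff_of_subset (subset_univ D)
    rw [this, map_top_sup_star_univ]

end Main

end Stmt2Aux

open Stmt2Aux in
/-- for a graph `F` with `s` vertices and minimum degree `δ ≥ 1`,
for all `n ≥ m ≥ s - 1`, `wsat(K_n, F) ≤ (δ-1)(n-m) + wsat(K_m, F)`. -/
theorem stmt2 {s n m : ℕ} (F : SimpleGraph (Fin s)) [DecidableRel F.Adj]
    (hδ : 1 ≤ F.minDegree) (hm : s - 1 ≤ m) (hn : m ≤ n) :
    wsat (⊤ : SimpleGraph (Fin n)) F ≤
      (F.minDegree - 1) * (n - m) + wsat (⊤ : SimpleGraph (Fin m)) F := by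
  classical
  have hs2 : 2 ≤ s := s_ge_two hδ
  -- nonemptiness of the weak-saturation sets
  have hne : ∀ k, s - 1 ≤ k →
      {c | ∃ H, WeaklySaturated (⊤ : SimpleGraph (Fin k)) F H ∧ H.edgeSet.ncard = c}.Nonempty := by
    intro k hk
    induction k, hk using Nat.le_induction with
    | base =>
      refine ⟨(⊤ : SimpleGraph (Fin (s - 1))).edgeSet.ncard, ⊤, ⟨le_refl _, ?_, [], trivial, ?_⟩,
        rfl⟩
      · rintro ⟨f, -⟩
        have := Fintype.card_le_of_embedding f
        simp only [Fintype.card_fin] at this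
        omega
      · rw [addEdges_eq_fold]
        rfl
    | succ k hk ih =>
      obtain ⟨c, H, hH, -⟩ := ih
      obtain ⟨H', hH', -⟩ := step_lemma hδ hk hH
      exact ⟨H'.edgeSet.ncard, H', hH', rfl⟩
  -- main induction
  induction n, hn using Nat.le_induction with
  | base =>
    simp
  | succ n hmn ih =>
    have hsn : s - 1 ≤ n := le_trans hm hmn
    obtain ⟨H, hH, hHcard⟩ := Nat.sInf_mem (hne n hsn)
    obtain ⟨H', hH', hcard'⟩ := step_lemma hδ hsn hH
    have h1 : wsat (⊤ : SimpleGraph (Fin (n + 1))) F ≤ H'.edgeSet.ncard :=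
      Nat.sInf_le ⟨H', hH', rfl⟩
    have h2 : H.edgeSet.ncard = wsat (⊤ : SimpleGraph (Fin n)) F := hHcard
    have key : wsat (⊤ : SimpleGraph (Fin (n + 1))) F ≤
        wsat (⊤ : SimpleGraph (Fin n)) F + (F.minDegree - 1) := by
      rw [← h2]; omega
    have harith : (F.minDegree - 1) * (n + 1 - m) =
        (F.minDegree - 1) * (n - m) + (F.minDegree - 1) := by
      rw [show n + 1 - m = (n - m) + 1 by omega, Nat.mul_add, Nat.mul_one]
    omega
end

section
/- Let F be a graph with δ(F) ≥ 1 and suppose there exist constants D and c_F with wsat(K_n, F) ≥ (δ(F)-1)n + D for all n, and wsat(K_n,F) = (c_F + o(1))n. Then c_F = δ(F) - 1, and there exists a constant d_F such that wsat(K_n, F) = (δ(F)-1)n + d_F for all sufficiently large n. -/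
open SimpleGraph Finset Filter

namespace Stmt8Aux

/-- `castSucc` as an embedding. -/
def jmb (n : ℕ) : Fin n ↪ Fin (n + 1) := ⟨Fin.castSucc, Fin.castSucc_injective n⟩

@[simp] lemma jmb_apply {n : ℕ} (x : Fin n) : jmb n x = x.castSucc := rfl

lemma map_fromEdgeSet {V W : Type*} (j : V ↪ W) (E : Set (Sym2 V)) :
    SimpleGraph.map j (SimpleGraph.fromEdgeSet E) =
      SimpleGraph.fromEdgeSet (Sym2.map j '' E) := by
  ext a b
  simp only [SimpleGraph.map_adj, fromEdgeSet_adj, Set.mem_image]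
  constructor
  · rintro ⟨x, y, ⟨he, hxy⟩, rfl, rfl⟩
    exact ⟨⟨s(x, y), he, Sym2.map_pair_eq _ _ _⟩, fun h => hxy (j.injective h)⟩
  · rintro ⟨⟨e, he, hme⟩, hab⟩
    induction e with
    | h x y =>
      rw [Sym2.map_pair_eq] at hme
      rcases Sym2.eq_iff.mp hme with ⟨h1, h2⟩ | ⟨h1, h2⟩
      · exact ⟨x, y, ⟨he, fun h => hab (h1 ▸ h2 ▸ h ▸ rfl)⟩, h1, h2⟩
      · refine ⟨y, x, ⟨by rwa [Sym2.eq_swap], fun h => hab (h1 ▸ h2 ▸ h ▸ rfl)⟩, h2, h1⟩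

lemma map_sup' {V W : Type*} (j : V ↪ W) (G₁ G₂ : SimpleGraph V) :
    SimpleGraph.map j (G₁ ⊔ G₂) = SimpleGraph.map j G₁ ⊔ SimpleGraph.map j G₂ := by
  ext a b
  simp only [SimpleGraph.map_adj, sup_adj]
  constructor
  · rintro ⟨x, y, h | h, rfl, rfl⟩
    exacts [Or.inl ⟨x, y, h, rfl, rfl⟩, Or.inr ⟨x, y, h, rfl, rfl⟩]
  · rintro (⟨x, y, h, rfl, rfl⟩ | ⟨x, y, h, rfl, rfl⟩)
    exacts [⟨x, y, Or.inl h, rfl, rfl⟩, ⟨x, y, Or.inr h, rfl, rfl⟩]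

lemma edgeSet_map' {V W : Type*} (j : V ↪ W) (G : SimpleGraph V) :
    (SimpleGraph.map j G).edgeSet = Sym2.map j '' G.edgeSet := by
  ext e
  induction e with
  | h a b =>
    simp only [mem_edgeSet, SimpleGraph.map_adj, Set.mem_image]
    constructor
    · rintro ⟨x, y, h, rfl, rfl⟩
      exact ⟨s(x, y), h, Sym2.map_pair_eq _ _ _⟩
    · rintro ⟨e, he, hme⟩
      induction e with
      | h x y =>
        rw [mem_edgeSet] at he
        rw [Sym2.map_pair_eq] at hme
        rcases Sym2.eq_iff.mp hme with ⟨h1, h2⟩ | ⟨h1, h2⟩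
        · exact ⟨x, y, he, h1, h2⟩
        · exact ⟨y, x, he.symm, h2, h1⟩

lemma addEdges_nil {V : Type*} (H : SimpleGraph V) : addEdges H [] = H := by
  simp [addEdges]

lemma addEdges_cons {V : Type*} (H : SimpleGraph V) (p : V × V) (l : List (V × V)) :
    addEdges H (p :: l) = addEdges (H ⊔ SimpleGraph.fromEdgeSet {s(p.1, p.2)}) l := by
  ext a b
  simp only [addEdges, sup_adj, fromEdgeSet_adj, Set.mem_setOf_eq, Set.mem_singleton_iff,
    List.mem_cons]
  constructor
  · rintro (h | ⟨⟨q, (rfl | hq), he⟩, hab⟩)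
    · exact Or.inl (Or.inl h)
    · exact Or.inl (Or.inr ⟨he, hab⟩)
    · exact Or.inr ⟨⟨q, hq, he⟩, hab⟩
  · rintro ((h | ⟨he, hab⟩) | ⟨⟨q, hq, he⟩, hab⟩)
    · exact Or.inl h
    · exact Or.inr ⟨⟨p, Or.inl rfl, he⟩, hab⟩
    · exact Or.inr ⟨⟨q, Or.inr hq, he⟩, hab⟩

lemma addEdges_append {V : Type*} (H : SimpleGraph V) (l₁ l₂ : List (V × V)) :
    addEdges H (l₁ ++ l₂) = addEdges (addEdges H l₁) l₂ := by
  induction l₁ generalizing H with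
  | nil => rw [addEdges_nil]; rfl
  | cons p l ih => rw [List.cons_append, addEdges_cons, addEdges_cons, ih]


section Part2
set_option linter.unusedSectionVars false
variable {s : ℕ} (F : SimpleGraph (Fin s)) [DecidableRel F.Adj]

lemma satProcess_append {V : Type*} :
    ∀ (l₁ l₂ : List (V × V)) (H : SimpleGraph V),
      SatProcess F H l₁ → SatProcess F (addEdges H l₁) l₂ → SatProcess F H (l₁ ++ l₂)
  | [], l₂, H, _, h₂ => by rwa [addEdges_nil] at h₂
  | p :: l₁, l₂, H, h₁, h₂ => by
    refine ⟨h₁.1, satProcess_append l₁ l₂ _ h₁.2 ?_⟩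
    rwa [addEdges_cons] at h₂

lemma satProcess_map {n : ℕ} (S : SimpleGraph (Fin (n + 1)))
    (hS : ∀ x y : Fin n, ¬ S.Adj x.castSucc y.castSucc) :
    ∀ (l : List (Fin n × Fin n)) (H : SimpleGraph (Fin n)), SatProcess F H l →
      SatProcess F (SimpleGraph.map (jmb n) H ⊔ S)
        (l.map fun p => (p.1.castSucc, p.2.castSucc))
  | [], H, _ => trivial
  | (x, y) :: l, H, h => by
    obtain ⟨⟨hxy, f, a, b, hab, hfa, hfb, hcopy⟩, hrest⟩ := h
    constructor
    · refine ⟨?_, f.trans (jmb n), a, b, hab, by simp [hfa], by simp [hfb], ?_⟩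
      · rintro (⟨-, x', y', h', hx', hy'⟩ | h)
        · simp only [jmb_apply] at hx' hy'
          exact hxy ((Fin.castSucc_injective n hx') ▸ (Fin.castSucc_injective n hy') ▸ h')
        · exact hS x y h
      · intro c d hcd
        rcases hcopy c d hcd with h2 | h2
        · exact Or.inl (Or.inl ⟨fun he => h2.ne (congrArg f ((f.trans (jmb n)).injective he)), f c, f d, h2, rfl, rfl⟩)
        · rw [fromEdgeSet_adj, Set.mem_singleton_iff] at h2
          refine Or.inr ((fromEdgeSet_adj _).mpr ⟨?_, fun h => h2.2 ((jmb n).injective h)⟩)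
          rw [Set.mem_singleton_iff]
          have := congrArg (Sym2.map (jmb n)) h2.1
          simpa [Sym2.map_pair_eq] using this
    · have key := satProcess_map S hS l (H ⊔ SimpleGraph.fromEdgeSet {s(x, y)}) hrest
      rw [map_sup', map_fromEdgeSet, Set.image_singleton, Sym2.map_pair_eq] at key
      rw [sup_right_comm] at key
      exact key

/-- The star graph joining the last vertex to the first `k` vertices. -/
def star (n k : ℕ) : SimpleGraph (Fin (n + 1)) :=
  SimpleGraph.fromEdgeSet ((fun x => s(Fin.last n, x)) '' {x : Fin (n + 1) | (x : ℕ) < k})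

lemma star_adj {n k : ℕ} (hk : k ≤ n) {u w : Fin (n + 1)} :
    (star n k).Adj u w ↔
      (u = Fin.last n ∧ (w : ℕ) < k) ∨ (w = Fin.last n ∧ (u : ℕ) < k) := by
  constructor
  · rintro h
    rw [star, fromEdgeSet_adj] at h
    obtain ⟨⟨x, hx, he⟩, hne⟩ := h
    rcases Sym2.eq_iff.mp he with ⟨h1, h2⟩ | ⟨h1, h2⟩
    · exact Or.inl ⟨h1.symm, h2 ▸ hx⟩
    · exact Or.inr ⟨h1.symm, h2 ▸ hx⟩
  · intro h
    rw [star, fromEdgeSet_adj]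
    rcases h with ⟨rfl, hw⟩ | ⟨rfl, hu⟩
    · refine ⟨⟨w, hw, rfl⟩, fun he => ?_⟩
      have := congrArg Fin.val he
      simp [Fin.last] at this; omega
    · refine ⟨⟨u, hu, Sym2.eq_swap⟩, fun he => ?_⟩
      have := congrArg Fin.val he
      simp [Fin.last] at this; omega

/-- Invariant: all non-last vertices form a clique, and the last vertex is joined to the
first `k` vertices. -/
def Inv (n k : ℕ) (G : SimpleGraph (Fin (n + 1))) : Prop :=
  (∀ x y : Fin (n + 1), x ≠ y → x ≠ Fin.last n → y ≠ Fin.last n → G.Adj x y) ∧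
  (∀ x : Fin (n + 1), (x : ℕ) < k → G.Adj (Fin.last n) x)

lemma s_pos (hδ : 1 ≤ F.minDegree) : 1 ≤ s := by
  rcases Nat.eq_zero_or_pos s with h | h
  · subst h
    rw [SimpleGraph.minDegree] at hδ
    simp at hδ
  · exact h

lemma minDegree_lt (hδ : 1 ≤ F.minDegree) : F.minDegree < s := by
  have h1 := s_pos F hδ
  haveI : Nonempty (Fin s) := ⟨⟨0, by omega⟩⟩
  obtain ⟨v, hv⟩ := F.exists_minimal_degree_vertex
  have := F.degree_lt_card_verts v
  rw [Fintype.card_fin] at this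
  omega

lemma newCopyStep_of_inv (hδ : 1 ≤ F.minDegree) {n : ℕ} (hn : s ≤ n + 1)
    (G : SimpleGraph (Fin (n + 1))) (hG : Inv n (F.minDegree - 1) G)
    {w : Fin (n + 1)} (hw : w ≠ Fin.last n) (hvadj : ¬ G.Adj (Fin.last n) w) :
    NewCopyStep F G (Fin.last n) w := by
  classical
  have hs1 : 1 ≤ s := s_pos F hδ
  haveI : Nonempty (Fin s) := ⟨⟨0, by omega⟩⟩
  obtain ⟨a, ha⟩ := F.exists_minimal_degree_vertex
  have hdeg : F.degree a = F.minDegree := ha.symm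
  have hδs : F.minDegree < s := minDegree_lt F hδ
  set δ := F.minDegree with hδdef
  have hbex : (F.neighborFinset a).Nonempty := by
    rw [← Finset.card_pos, card_neighborFinset_eq_degree, hdeg]; omega
  obtain ⟨b, hb⟩ := hbex
  have hab : F.Adj a b := by rwa [SimpleGraph.mem_neighborFinset] at hb
  set T : Finset (Fin s) := F.neighborFinset a \ {b} with hTdef
  have hTcard : T.card = δ - 1 := by
    rw [hTdef, Finset.card_sdiff_of_subset (by simpa using hb)]
    simp [card_neighborFinset_eq_degree, hdeg]
  set R : Finset (Fin s) := Finset.univ \ insert a (F.neighborFinset a) with hRdef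
  have haN : a ∉ F.neighborFinset a := by simp
  have hRcard : R.card = s - (δ + 1) := by
    rw [hRdef, Finset.card_sdiff_of_subset (Finset.subset_univ _),
      Finset.card_insert_of_notMem haN, Finset.card_univ, Fintype.card_fin,
      card_neighborFinset_eq_degree, hdeg]
  set C : Finset (Fin (n + 1)) := Finset.univ.filter (fun x => (x : ℕ) < δ - 1) with hCdef
  have hCval : C.image Fin.val = Finset.range (δ - 1) := by
    ext m
    simp only [hCdef, Finset.mem_image, Finset.mem_filter, Finset.mem_univ, true_and,
      Finset.mem_range]
    constructor
    · rintro ⟨x, hx, rfl⟩; exact hx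
    · intro hm; exact ⟨⟨m, by omega⟩, hm, rfl⟩
  have hCcard : C.card = δ - 1 := by
    rw [← Finset.card_range (δ - 1), ← hCval, Finset.card_image_of_injective _ Fin.val_injective]
  set B : Finset (Fin (n + 1)) := Finset.univ \ insert (Fin.last n) (insert w C) with hBdef
  have hBcard : s - (δ + 1) ≤ B.card := by
    rw [hBdef, Finset.card_sdiff_of_subset (Finset.subset_univ _), Finset.card_univ, Fintype.card_fin]
    have h1 := Finset.card_insert_le (Fin.last n) (insert w C)
    have h2 := Finset.card_insert_le w C
    omega
  have hTC : Fintype.card ↥T ≤ Fintype.card ↥C := by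
    rw [Fintype.card_coe, Fintype.card_coe, hTcard, hCcard]
  obtain ⟨eT⟩ := Function.Embedding.nonempty_of_card_le hTC
  have hRB : Fintype.card ↥R ≤ Fintype.card ↥B := by
    rw [Fintype.card_coe, Fintype.card_coe, hRcard]; omega
  obtain ⟨eR⟩ := Function.Embedding.nonempty_of_card_le hRB
  have hmemR : ∀ c : Fin s, c ≠ a → c ≠ b → c ∉ T → c ∈ R := by
    intro c h1 h2 h3
    rw [hRdef, Finset.mem_sdiff]
    refine ⟨Finset.mem_univ _, fun hc => ?_⟩
    rw [Finset.mem_insert] at hc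
    rcases hc with hc | hc
    · exact h1 hc
    · exact h3 (by rw [hTdef, Finset.mem_sdiff]; exact ⟨hc, by simpa using h2⟩)
  set f0 : Fin s → Fin (n + 1) := fun c =>
    if hca : c = a then Fin.last n
    else if hcb : c = b then w
    else if h : c ∈ T then (eT ⟨c, h⟩ : Fin (n + 1))
    else (eR ⟨c, hmemR c hca hcb h⟩ : Fin (n + 1)) with hf0
  have hwC : w ∉ C := by
    intro hwc
    rw [hCdef, Finset.mem_filter] at hwc
    exact hvadj (hG.2 w hwc.2)
  have hlastC : Fin.last n ∉ C := by
    rw [hCdef, Finset.mem_filter]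
    rintro ⟨-, h⟩
    simp only [Fin.val_last] at h
    omega
  have hlastB : Fin.last n ∉ B := by
    rw [hBdef, Finset.mem_sdiff]
    rintro ⟨-, h⟩
    exact h (Finset.mem_insert_self _ _)
  have hwB : w ∉ B := by
    rw [hBdef, Finset.mem_sdiff]
    rintro ⟨-, h⟩
    exact h (Finset.mem_insert_of_mem (Finset.mem_insert_self _ _))
  have hCB : ∀ x, x ∈ C → x ∉ B := by
    intro x hx
    rw [hBdef, Finset.mem_sdiff]
    rintro ⟨-, h⟩
    exact h (Finset.mem_insert_of_mem (Finset.mem_insert_of_mem hx))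
  -- values of the branches
  have hfa : f0 a = Fin.last n := by rw [hf0]; simp
  have hfb : f0 b = w := by rw [hf0]; simp [hab.ne']
  have hfT : ∀ c (h : c ∈ T), c ≠ a → c ≠ b → f0 c ∈ C := by
    intro c h h1 h2
    rw [hf0]; simp only [dif_neg h1, dif_neg h2, dif_pos h]
    exact (eT ⟨c, h⟩).2
  have hfR : ∀ c (h1 : c ≠ a) (h2 : c ≠ b) (h3 : c ∉ T), f0 c ∈ B := by
    intro c h1 h2 h3
    rw [hf0]; simp only [dif_neg h1, dif_neg h2, dif_neg h3]
    exact (eR ⟨c, hmemR c h1 h2 h3⟩).2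
  have hclass : ∀ c : Fin s, c ≠ a → f0 c = w ∨ f0 c ∈ C ∨ f0 c ∈ B := by
    intro c h1
    by_cases h2 : c = b
    · subst h2; exact Or.inl hfb
    · by_cases h3 : c ∈ T
      · exact Or.inr (Or.inl (hfT c h3 h1 h2))
      · exact Or.inr (Or.inr (hfR c h1 h2 h3))
  have hnotlast : ∀ c : Fin s, c ≠ a → f0 c ≠ Fin.last n := by
    intro c h1 he
    rcases hclass c h1 with h | h | h
    · exact hw (he ▸ h).symm
    · exact hlastC (he ▸ h)
    · exact hlastB (he ▸ h)
  have hclass2 : ∀ c : Fin s, c ≠ a → c ≠ b → f0 c ∈ C ∨ f0 c ∈ B := by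
    intro c h1 h2
    by_cases h3 : c ∈ T
    · exact Or.inl (hfT c h3 h1 h2)
    · exact Or.inr (hfR c h1 h2 h3)
  have hinj : Function.Injective f0 := by
    intro c c' h
    by_cases hca : c = a <;> by_cases hca' : c' = a
    · rw [hca, hca']
    · subst hca; rw [hfa] at h; exact absurd h.symm (hnotlast c' hca')
    · subst hca'; rw [hfa] at h; exact absurd h (hnotlast c hca)
    · by_cases hcb : c = b <;> by_cases hcb' : c' = b
      · rw [hcb, hcb']
      · subst hcb; rw [hfb] at h
        rcases hclass2 c' hca' hcb' with h' | h'
        · rw [← h] at h'; exact absurd h' hwC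
        · rw [← h] at h'; exact absurd h' hwB
      · subst hcb'; rw [hfb] at h
        rcases hclass2 c hca hcb with h' | h'
        · rw [h] at h'; exact absurd h' hwC
        · rw [h] at h'; exact absurd h' hwB
      · by_cases hcT : c ∈ T <;> by_cases hcT' : c' ∈ T
        · rw [hf0] at h
          simp only [dif_neg hca, dif_neg hcb, dif_pos hcT, dif_neg hca', dif_neg hcb',
            dif_pos hcT'] at h
          have := eT.injective (Subtype.ext h)
          exact congrArg Subtype.val this
        · have h1 := hfT c hcT hca hcb
          have h2 := hfR c' hca' hcb' hcT'
          rw [h] at h1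
          exact absurd h2 (hCB _ h1)
        · have h1 := hfT c' hcT' hca' hcb'
          have h2 := hfR c hca hcb hcT
          rw [← h] at h1
          exact absurd h2 (hCB _ h1)
        · rw [hf0] at h
          simp only [dif_neg hca, dif_neg hcb, dif_neg hcT, dif_neg hca', dif_neg hcb',
            dif_neg hcT'] at h
          have := eR.injective (Subtype.ext h)
          exact congrArg Subtype.val this
  refine ⟨hvadj, ⟨f0, hinj⟩, a, b, hab, hfa, hfb, ?_⟩
  intro c d hcd
  simp only [Function.Embedding.coeFn_mk]
  have hCadj : ∀ x, x ∈ C → G.Adj (Fin.last n) x := by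
    intro x hx
    rw [hCdef, Finset.mem_filter] at hx
    exact hG.2 x hx.2
  have hedge : (SimpleGraph.fromEdgeSet {s(Fin.last n, w)}).Adj (Fin.last n) w := by
    rw [fromEdgeSet_adj]
    exact ⟨rfl, fun h => hw h.symm⟩
  by_cases hca : c = a
  · by_cases hdb : d = b
    · rw [hca, hdb, hfa, hfb]
      exact Or.inr hedge
    · have hda : d ≠ a := (hca ▸ hcd : F.Adj a d).ne'
      have hdT : d ∈ T := by
        rw [hTdef, Finset.mem_sdiff, SimpleGraph.mem_neighborFinset]
        exact ⟨(hca ▸ hcd : F.Adj a d), by simpa using hdb⟩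
      rw [hca, hfa]
      exact Or.inl (hCadj _ (hfT d hdT hda hdb))
  · by_cases hda : d = a
    · by_cases hcb : c = b
      · rw [hcb, hda, hfa, hfb]
        exact Or.inr hedge.symm
      · have hcT : c ∈ T := by
          rw [hTdef, Finset.mem_sdiff, SimpleGraph.mem_neighborFinset]
          exact ⟨(hda ▸ hcd : F.Adj c a).symm, by simpa using hcb⟩
        rw [hda, hfa]
        exact Or.inl (hCadj _ (hfT c hcT hca hcb)).symm
    · exact Or.inl (hG.1 _ _ (fun he => hcd.ne (hinj he)) (hnotlast c hca) (hnotlast d hda))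
lemma satProcess_star (hδ : 1 ≤ F.minDegree) {n : ℕ} (hn : s ≤ n + 1) :
    ∀ (vs : List (Fin (n + 1))), vs.Nodup → (∀ v ∈ vs, v ≠ Fin.last n) →
      ∀ G : SimpleGraph (Fin (n + 1)), Inv n (F.minDegree - 1) G →
        (∀ v ∈ vs, ¬ G.Adj (Fin.last n) v) →
        SatProcess F G (vs.map fun v => (Fin.last n, v))
  | [], _, _, G, _, _ => trivial
  | v :: vs, hnd, hnl, G, hG, hadj => by
    refine ⟨newCopyStep_of_inv F hδ hn G hG (hnl v (by simp)) (hadj v (by simp)), ?_⟩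
    have hvvs : v ∉ vs := (List.nodup_cons.mp hnd).1
    refine satProcess_star hδ hn vs (List.nodup_cons.mp hnd).2
      (fun u hu => hnl u (List.mem_cons_of_mem _ hu)) _
      ⟨fun x y hxy hx hy => Or.inl (hG.1 x y hxy hx hy),
       fun x hx => Or.inl (hG.2 x hx)⟩ ?_
    intro u hu hadj'
    rcases hadj' with h | h
    · exact hadj u (List.mem_cons_of_mem _ hu) h
    · rw [fromEdgeSet_adj, Set.mem_singleton_iff] at h
      rcases Sym2.eq_iff.mp h.1 with ⟨-, h2⟩ | ⟨h1, -⟩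
      · have h2' : u = v := h2
        exact hvvs (h2' ▸ hu)
      · have h1' : Fin.last n = v := h1
        exact hnl v (by simp) h1'.symm

lemma not_hasCopy_extend (hδ : 1 ≤ F.minDegree) {n : ℕ} (hn : s ≤ n + 1)
    (H : SimpleGraph (Fin n)) (hfree : ¬ HasCopy F H) :
    ¬ HasCopy F (SimpleGraph.map (jmb n) H ⊔ star n (F.minDegree - 1)) := by
  have hδs : F.minDegree < s := minDegree_lt F hδ
  have hkn : F.minDegree - 1 ≤ n := by omega
  rintro ⟨f, hf⟩
  by_cases hex : ∃ c, f c = Fin.last n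
  · obtain ⟨c, hc⟩ := hex
    have hmap : ∀ d ∈ F.neighborFinset c, ((f d : Fin (n + 1)) : ℕ) < F.minDegree - 1 := by
      intro d hd
      rw [SimpleGraph.mem_neighborFinset] at hd
      have hadj := hf c d hd
      rw [hc] at hadj
      rcases hadj with h | h
      · obtain ⟨-, x, y, -, hx, -⟩ := h
        rw [jmb_apply] at hx
        exact absurd hx (Fin.castSucc_lt_last x).ne
      · rcases (star_adj hkn).mp h with ⟨-, h2⟩ | ⟨h2, -⟩
        · exact h2
        · exact absurd (f.injective (h2.trans hc.symm)) hd.ne'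
    have hsub : (F.neighborFinset c).image (fun d => ((f d : Fin (n + 1)) : ℕ)) ⊆
        Finset.range (F.minDegree - 1) := by
      intro m hm
      rw [Finset.mem_image] at hm
      obtain ⟨d, hd, rfl⟩ := hm
      rw [Finset.mem_range]
      exact hmap d hd
    have hinj : Function.Injective (fun d => ((f d : Fin (n + 1)) : ℕ)) :=
      Fin.val_injective.comp f.injective
    have hcard := Finset.card_le_card hsub
    rw [Finset.card_image_of_injective _ hinj, card_neighborFinset_eq_degree,
      Finset.card_range] at hcard
    have := F.minDegree_le_degree c
    omega
  · push_neg at hex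
    have hlt : ∀ c, ((f c : Fin (n + 1)) : ℕ) < n := fun c => Fin.val_lt_last (hex c)
    refine hfree ⟨⟨fun c => ⟨(f c : Fin (n + 1)), hlt c⟩, fun c c' h => ?_⟩, ?_⟩
    · have hval := congrArg Fin.val h
      exact f.injective (Fin.ext hval)
    · intro c d hcd
      have hadj := hf c d hcd
      rcases hadj with h | h
      · obtain ⟨-, x, y, hxy, hx, hy⟩ := h
        rw [jmb_apply] at hx hy
        have hx' : x = ⟨(f c : Fin (n + 1)), hlt c⟩ := by
          apply Fin.ext
          simpa using congrArg Fin.val hx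
        have hy' : y = ⟨(f d : Fin (n + 1)), hlt d⟩ := by
          apply Fin.ext
          simpa using congrArg Fin.val hy
        rwa [hx', hy'] at hxy
      · exfalso
        rcases (star_adj hkn).mp h with ⟨h1, -⟩ | ⟨h1, -⟩
        · exact hex c h1
        · exact hex d h1

lemma star_ncard {n k : ℕ} : (star n k).edgeSet.ncard ≤ k := by
  rw [star, edgeSet_fromEdgeSet]
  calc (((fun x => s(Fin.last n, x)) '' {x : Fin (n + 1) | (x : ℕ) < k}) \
        {e | e.IsDiag}).ncard
      ≤ ((fun x => s(Fin.last n, x)) '' {x : Fin (n + 1) | (x : ℕ) < k}).ncard :=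
        Set.ncard_le_ncard Set.diff_subset (Set.toFinite _)
    _ ≤ ({x : Fin (n + 1) | (x : ℕ) < k}).ncard := Set.ncard_image_le (Set.toFinite _)
    _ = ((Fin.val '' {x : Fin (n + 1) | (x : ℕ) < k}) : Set ℕ).ncard :=
        (Set.ncard_image_of_injective _ Fin.val_injective).symm
    _ ≤ ((Finset.range k : Finset ℕ) : Set ℕ).ncard := by
        apply Set.ncard_le_ncard _ (Finset.range k).finite_toSet
        rintro m ⟨x, hx, rfl⟩
        simpa using hx
    _ = k := by rw [Set.ncard_coe_finset, Finset.card_range]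

lemma addEdges_map {n : ℕ} (H : SimpleGraph (Fin n)) (S : SimpleGraph (Fin (n + 1)))
    (l : List (Fin n × Fin n)) :
    addEdges (SimpleGraph.map (jmb n) H ⊔ S) (l.map fun p => (p.1.castSucc, p.2.castSucc)) =
      SimpleGraph.map (jmb n) (addEdges H l) ⊔ S := by
  have hEE : {e : Sym2 (Fin (n + 1)) |
        ∃ p ∈ l.map (fun p : Fin n × Fin n => (p.1.castSucc, p.2.castSucc)), e = s(p.1, p.2)}
      = Sym2.map (jmb n) '' {e : Sym2 (Fin n) | ∃ p ∈ l, e = s(p.1, p.2)} := by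
    ext e
    simp only [Set.mem_setOf_eq, List.mem_map, Set.mem_image]
    constructor
    · rintro ⟨p', ⟨q, hq, rfl⟩, rfl⟩
      exact ⟨s(q.1, q.2), ⟨q, hq, rfl⟩, by simp [Sym2.map_pair_eq]⟩
    · rintro ⟨e', ⟨q, hq, rfl⟩, rfl⟩
      exact ⟨(q.1.castSucc, q.2.castSucc), ⟨q, hq, rfl⟩, by simp [Sym2.map_pair_eq]⟩
  rw [addEdges, addEdges, map_sup', map_fromEdgeSet, sup_right_comm, hEE]

lemma extend (hδ : 1 ≤ F.minDegree) {n : ℕ} (hn : s ≤ n + 1)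
    (H : SimpleGraph (Fin n)) (hH : WeaklySaturated ⊤ F H) :
    ∃ H' : SimpleGraph (Fin (n + 1)), WeaklySaturated ⊤ F H' ∧
      H'.edgeSet.ncard ≤ H.edgeSet.ncard + (F.minDegree - 1) := by
  classical
  obtain ⟨-, hfree, l, hproc, hadd⟩ := hH
  have hδs : F.minDegree < s := minDegree_lt F hδ
  have hkn : F.minDegree - 1 ≤ n := by omega
  set k := F.minDegree - 1 with hk
  refine ⟨SimpleGraph.map (jmb n) H ⊔ star n k,
    ⟨le_top, not_hasCopy_extend F hδ hn H hfree, ?_⟩, ?_⟩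
  · -- the saturation process
    have hS : ∀ x y : Fin n, ¬ (star n k).Adj x.castSucc y.castSucc := by
      intro x y h
      rcases (star_adj hkn).mp h with ⟨h1, -⟩ | ⟨h1, -⟩
      · exact (Fin.castSucc_lt_last x).ne h1
      · exact (Fin.castSucc_lt_last y).ne h1
    set l1 := l.map (fun p : Fin n × Fin n => (p.1.castSucc, p.2.castSucc)) with hl1
    set vs := (List.finRange (n + 1)).filter
        (fun v : Fin (n + 1) => decide (k ≤ (v : ℕ) ∧ v ≠ Fin.last n)) with hvs
    set l2 := vs.map (fun v => (Fin.last n, v)) with hl2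
    have hvsmem : ∀ v ∈ vs, k ≤ (v : ℕ) ∧ v ≠ Fin.last n := by
      intro v hv
      rw [hvs, List.mem_filter] at hv
      exact of_decide_eq_true hv.2
    have hvsmem' : ∀ v : Fin (n + 1), k ≤ (v : ℕ) → v ≠ Fin.last n → v ∈ vs := by
      intro v h1 h2
      rw [hvs, List.mem_filter]
      exact ⟨List.mem_finRange v, decide_eq_true ⟨h1, h2⟩⟩
    have hG1 : addEdges (SimpleGraph.map (jmb n) H ⊔ star n k) l1 =
        SimpleGraph.map (jmb n) ⊤ ⊔ star n k := by
      rw [hl1, addEdges_map, hadd]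
    have hInv : Inv n k (SimpleGraph.map (jmb n) ⊤ ⊔ star n k) := by
      constructor
      · intro x y hxy hx hy
        refine Or.inl ⟨hxy, ⟨(x : ℕ), Fin.val_lt_last hx⟩, ⟨(y : ℕ), Fin.val_lt_last hy⟩, ?_,
          Fin.ext rfl, Fin.ext rfl⟩
        rw [top_adj]
        intro he
        exact hxy (Fin.ext (by simpa using congrArg Fin.val he))
      · intro x hx
        exact Or.inr ((star_adj hkn).mpr (Or.inl ⟨rfl, hx⟩))
    refine ⟨l1 ++ l2, satProcess_append F l1 l2 _ ?_ ?_, ?_⟩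
    · exact satProcess_map F (star n k) hS l H hproc
    · rw [hG1, hl2]
      refine satProcess_star F hδ hn vs ?_ (fun v hv => (hvsmem v hv).2) _ hInv ?_
      · exact List.Nodup.filter _ (List.nodup_finRange _)
      · intro v hv hadj'
        rcases hadj' with h | h
        · obtain ⟨-, x, y, -, hx, -⟩ := h
          rw [jmb_apply] at hx
          exact (Fin.castSucc_lt_last x).ne hx
        · rcases (star_adj hkn).mp h with ⟨-, h2⟩ | ⟨h2, -⟩
          · have := (hvsmem v hv).1; omega
          · exact (hvsmem v hv).2 h2
    · rw [addEdges_append, hG1]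
      apply le_antisymm le_top
      intro x y hxy
      rw [top_adj] at hxy
      show (addEdges (SimpleGraph.map (jmb n) ⊤ ⊔ star n k) l2).Adj x y
      by_cases hx : x = Fin.last n
      · by_cases hy : y = Fin.last n
        · exact absurd (hx.trans hy.symm) hxy
        · by_cases hyk : (y : ℕ) < k
          · exact Or.inl (Or.inr ((star_adj hkn).mpr (Or.inl ⟨hx, hyk⟩)))
          · refine Or.inr ((fromEdgeSet_adj _).mpr ⟨?_, hxy⟩)
            refine ⟨(Fin.last n, y), ?_, by rw [hx]⟩
            rw [hl2, List.mem_map]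
            exact ⟨y, hvsmem' y (by omega) hy, rfl⟩
      · by_cases hy : y = Fin.last n
        · by_cases hxk : (x : ℕ) < k
          · exact Or.inl (Or.inr ((star_adj hkn).mpr (Or.inr ⟨hy, hxk⟩)))
          · refine Or.inr ((fromEdgeSet_adj _).mpr ⟨?_, hxy⟩)
            refine ⟨(Fin.last n, x), ?_, ?_⟩
            · rw [hl2, List.mem_map]
              exact ⟨x, hvsmem' x (by omega) hx, rfl⟩
            · rw [hy]; exact Sym2.eq_swap
        · refine Or.inl (Or.inl ⟨hxy, ⟨(x : ℕ), Fin.val_lt_last hx⟩, ⟨(y : ℕ), Fin.val_lt_last hy⟩,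
            ?_, Fin.ext rfl, Fin.ext rfl⟩)
          rw [top_adj]
          intro he
          exact hxy (Fin.ext (by simpa using congrArg Fin.val he))
  · -- the edge count
    rw [edgeSet_sup]
    calc ((SimpleGraph.map (jmb n) H).edgeSet ∪ (star n k).edgeSet).ncard
        ≤ (SimpleGraph.map (jmb n) H).edgeSet.ncard + (star n k).edgeSet.ncard :=
          Set.ncard_union_le _ _
      _ ≤ H.edgeSet.ncard + k := by
          rw [edgeSet_map', Set.ncard_image_of_injective _ (Sym2.map.injective (jmb n).injective)]
          exact Nat.add_le_add_left star_ncard _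

lemma base (hδ : 1 ≤ F.minDegree) :
    WeaklySaturated (⊤ : SimpleGraph (Fin (s - 1))) F (⊤ : SimpleGraph (Fin (s - 1))) := by
  refine ⟨le_rfl, ?_, [], trivial, addEdges_nil _⟩
  rintro ⟨f, -⟩
  have h1 := Fintype.card_le_of_embedding f
  rw [Fintype.card_fin, Fintype.card_fin] at h1
  have h2 := s_pos F hδ
  omega

end Part2

end Stmt8Aux

open Stmt8Aux

/-- if `wsat(K_n, F) ≥ (δ(F)-1)n + D` for all `n` and
`wsat(K_n, F) = (c_F + o(1))n`, then `c_F = δ(F) - 1` and `wsat(K_n, F) = (δ(F)-1)n + d_F`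
for some constant `d_F` and all large `n`. -/
theorem stmt8 {s : ℕ} (F : SimpleGraph (Fin s)) [DecidableRel F.Adj]
    (hδ : 1 ≤ F.minDegree) (D : ℝ)
    (hlow : ∀ n : ℕ, ((F.minDegree : ℝ) - 1) * n + D ≤ (wsat (⊤ : SimpleGraph (Fin n)) F : ℝ))
    (c : ℝ) (ε : ℕ → ℝ) (hε : Tendsto ε atTop (nhds 0))
    (hasymp : ∀ n : ℕ, (wsat (⊤ : SimpleGraph (Fin n)) F : ℝ) = (c + ε n) * n) :
    c = (F.minDegree : ℝ) - 1 ∧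
    ∃ d : ℝ, ∀ᶠ n in atTop,
      (wsat (⊤ : SimpleGraph (Fin n)) F : ℝ) = ((F.minDegree : ℝ) - 1) * n + d := by
  classical
  set k := F.minDegree - 1 with hk
  set W : ℕ → ℕ := fun n => wsat (⊤ : SimpleGraph (Fin n)) F with hW
  have hs1 : 1 ≤ s := s_pos F hδ
  have hδR : ((k : ℕ) : ℝ) = (F.minDegree : ℝ) - 1 := by
    rw [hk]; push_cast [hδ]; ring
  -- nonemptiness of the defining sets
  have key : ∀ n, s - 1 ≤ n →
      {m | ∃ H, WeaklySaturated (⊤ : SimpleGraph (Fin n)) F H ∧ H.edgeSet.ncard = m}.Nonempty := by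
    intro n
    refine Nat.le_induction ?_ ?_ n
    · exact ⟨_, ⊤, base F hδ, rfl⟩
    · intro m hm ih
      obtain ⟨H, hws, -⟩ := Nat.sInf_mem ih
      obtain ⟨H', hws', -⟩ := extend F hδ (by omega) H hws
      exact ⟨_, H', hws', rfl⟩
  have hmono : ∀ n, s - 1 ≤ n → W (n + 1) ≤ W n + k := by
    intro n hn
    obtain ⟨H, hws, hcard⟩ := Nat.sInf_mem (key n hn)
    obtain ⟨H', hws', hcard'⟩ := extend F hδ (by omega) H hws
    calc W (n + 1) ≤ H'.edgeSet.ncard := Nat.sInf_le ⟨H', hws', rfl⟩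
      _ ≤ H.edgeSet.ncard + k := hcard'
      _ = W n + k := by rw [hcard]; rfl
  have hUB : ∀ n, s - 1 ≤ n → W n ≤ W (s - 1) + k * n := by
    intro n
    refine Nat.le_induction ?_ ?_ n
    · exact Nat.le_add_right _ _
    · intro m hm ih
      calc W (m + 1) ≤ W m + k := hmono m hm
        _ ≤ W (s - 1) + k * m + k := Nat.add_le_add_right ih k
        _ = W (s - 1) + k * (m + 1) := by rw [Nat.mul_succ, Nat.add_assoc]
  -- the limit argument
  set B : ℝ := (W (s - 1) : ℝ) with hB
  have hup : ∀ᶠ n in atTop, c + ε n ≤ (F.minDegree : ℝ) - 1 + B / n := by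
    filter_upwards [eventually_ge_atTop (max 1 (s - 1))] with n hn
    have hn1 : 1 ≤ n := le_trans (le_max_left _ _) hn
    have hns : s - 1 ≤ n := le_trans (le_max_right _ _) hn
    have hpos : (0 : ℝ) < n := by exact_mod_cast hn1
    have h1 : (W n : ℝ) ≤ B + ((F.minDegree : ℝ) - 1) * n := by
      have h := hUB n hns
      have h' : (W n : ℝ) ≤ (W (s - 1) : ℝ) + ((k : ℕ) : ℝ) * n := by exact_mod_cast h
      rw [hδR] at h'
      rw [hB]
      exact h'
    have h2 : (c + ε n) * n ≤ ((F.minDegree : ℝ) - 1 + B / n) * n := by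
      rw [← hasymp n, add_mul, div_mul_cancel₀ _ hpos.ne']
      calc (W n : ℝ) ≤ B + ((F.minDegree : ℝ) - 1) * n := h1
        _ = ((F.minDegree : ℝ) - 1) * n + B := by ring
    exact le_of_mul_le_mul_right h2 hpos
  have hlo : ∀ᶠ n in atTop, (F.minDegree : ℝ) - 1 + D / n ≤ c + ε n := by
    filter_upwards [eventually_ge_atTop 1] with n hn
    have hpos : (0 : ℝ) < n := by exact_mod_cast hn
    have h := hlow n
    rw [hasymp n] at h
    have h2 : (((F.minDegree : ℝ) - 1) + D / n) * n ≤ (c + ε n) * n := by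
      rw [add_mul, div_mul_cancel₀ _ hpos.ne']
      exact h
    exact le_of_mul_le_mul_right h2 hpos
  have t1 : Tendsto (fun n : ℕ => (F.minDegree : ℝ) - 1 + B / n) atTop
      (nhds ((F.minDegree : ℝ) - 1)) := by
    simpa using tendsto_const_nhds.add (tendsto_const_div_atTop_nhds_zero_nat B)
  have t2 : Tendsto (fun n : ℕ => (F.minDegree : ℝ) - 1 + D / n) atTop
      (nhds ((F.minDegree : ℝ) - 1)) := by
    simpa using tendsto_const_nhds.add (tendsto_const_div_atTop_nhds_zero_nat D)
  have t3 : Tendsto (fun n : ℕ => c + ε n) atTop (nhds c) := by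
    simpa using tendsto_const_nhds.add hε
  have hc1 : (F.minDegree : ℝ) - 1 ≤ c := le_of_tendsto_of_tendsto t2 t3 hlo
  have hc2 : c ≤ (F.minDegree : ℝ) - 1 := le_of_tendsto_of_tendsto t3 t1 hup
  refine ⟨le_antisymm hc2 hc1, ?_⟩
  -- eventually constant integer sequence
  set A : ℕ → ℤ := fun n => (W n : ℤ) - k * n with hA
  have hAcast : ∀ n : ℕ, ((A n : ℤ) : ℝ) = (W n : ℝ) - ((F.minDegree : ℝ) - 1) * n := by
    intro n
    rw [hA]
    push_cast
    rw [hδR]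
  have hWn : ∀ n : ℕ, wsat (⊤ : SimpleGraph (Fin n)) F = W n := fun _ => rfl
  have hlb : ∀ n, ⌈D⌉ ≤ A n := by
    intro n
    rw [Int.ceil_le]
    have h := hlow n
    rw [hWn n] at h
    rw [hAcast n]
    linarith
  have hamono : ∀ p q : ℕ, s - 1 ≤ p → p ≤ q → A q ≤ A p := by
    intro p q hp hpq
    refine Nat.le_induction le_rfl (fun m hm ih => le_trans ?_ ih) q hpq
    have h := hmono m (le_trans hp hm)
    have hcast : (W (m + 1) : ℤ) ≤ (W m : ℤ) + k := by exact_mod_cast h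
    have he : (k : ℤ) * ((m : ℤ) + 1) = (k : ℤ) * m + k := by ring
    rw [hA]
    push_cast
    linarith
  obtain ⟨m0, ⟨N, hNs, hNv⟩, hleast⟩ :=
    Int.exists_least_of_bdd (P := fun z => ∃ n : ℕ, s - 1 ≤ n ∧ A n = z)
      ⟨⌈D⌉, fun z hz => by obtain ⟨n, -, rfl⟩ := hz; exact hlb n⟩
      ⟨A (s - 1), s - 1, le_rfl, rfl⟩
  refine ⟨(m0 : ℝ), eventually_atTop.mpr ⟨N, fun n hn => ?_⟩⟩
  have h1 : A n ≤ m0 := hNv ▸ hamono N n hNs hn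
  have h2 : m0 ≤ A n := hleast _ ⟨n, le_trans hNs hn, rfl⟩
  have h3 : A n = m0 := le_antisymm h1 h2
  have h3' : (W n : ℤ) - (k : ℤ) * n = m0 := h3
  have h4 : (W n : ℤ) = (k : ℤ) * n + m0 := by linarith
  have h5 : (W n : ℝ) = ((k : ℕ) : ℝ) * n + (m0 : ℝ) := by exact_mod_cast h4
  rw [show (wsat (⊤ : SimpleGraph (Fin n)) F : ℝ) = (W n : ℝ) from rfl, h5, hδR]
end

section
/- Let F be a graph with δ(F) ≥ 1 and let n ≥ |V(F)|. If a weakly (K_n,F)-saturated graph H is disconnected and H ≠ K_n, then in any valid weak saturation ordering, the first edge joining two connected components of H is a cut edge of the copy of F it creates. Consequently, if F has no cut edge, every weakly (K_n,F)-saturated graph H with H ≠ K_n is connected, and wsat(K_n,F) ≥ n - 1. -/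
open SimpleGraph Finset Filter

lemma reach_lift {W V : Type*} {G : SimpleGraph W} {H : SimpleGraph V} (f : W → V)
    (h : ∀ c d, G.Adj c d → H.Reachable (f c) (f d)) {a b : W}
    (hr : G.Reachable a b) : H.Reachable (f a) (f b) := by
  obtain ⟨w⟩ := hr
  induction w with
  | nil => exact Reachable.refl _
  | cons h' p ih => exact (h _ _ h').trans ih

lemma addEdges_adj {V : Type*} (H : SimpleGraph V) (l : List (V × V)) (u v : V) :
    (addEdges H l).Adj u v ↔ H.Adj u v ∨ ((∃ p ∈ l, s(u,v) = s(p.1,p.2)) ∧ u ≠ v) := by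
  simp [addEdges]

lemma mem_take_get {α : Type*} (l : List α) (m : ℕ) {p : α} (hp : p ∈ l.take m) :
    ∃ (k : ℕ) (hk : k < l.length), k < m ∧ l.get ⟨k, hk⟩ = p := by
  obtain ⟨k, hk, he⟩ := List.mem_iff_getElem.mp hp
  have hk' : k < min m l.length := by simpa using hk
  refine ⟨k, lt_of_lt_of_le hk' (min_le_right _ _), lt_of_lt_of_le hk' (min_le_left _ _), ?_⟩
  rw [List.get_eq_getElem]
  simp only [List.getElem_take] at he
  exact he

lemma satProcess_get {W V : Type*} (F : SimpleGraph W) :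
    ∀ (l : List (V × V)) (H : SimpleGraph V), SatProcess F H l →
      ∀ (i : ℕ) (hi : i < l.length),
        ∃ f : W ↪ V, ∃ a b : W, F.Adj a b ∧ f a = (l.get ⟨i, hi⟩).1 ∧
          f b = (l.get ⟨i, hi⟩).2 ∧
          ∀ c d, F.Adj c d → (addEdges H (l.take (i + 1))).Adj (f c) (f d) := by
  intro l
  induction l with
  | nil => intro H _ i hi; simp at hi
  | cons e l ih =>
    intro H hsp i hi
    obtain ⟨⟨_, f, a, b, hab, hfa, hfb, hcopy⟩, hsp'⟩ := hsp
    match i with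
    | 0 =>
      refine ⟨f, a, b, hab, hfa, hfb, fun c d hcd => ?_⟩
      rw [List.take_succ_cons, List.take_zero, addEdges_singleton]
      exact hcopy c d hcd
    | (i + 1) =>
      have hi' : i < l.length := by simpa using hi
      obtain ⟨f, a, b, hab, hfa, hfb, hcopy'⟩ := ih _ hsp' i hi'
      refine ⟨f, a, b, hab, hfa, hfb, fun c d hcd => ?_⟩
      rw [List.take_succ_cons, addEdges_cons]
      exact hcopy' c d hcd

lemma core {s n : ℕ} (F : SimpleGraph (Fin s)) (H : SimpleGraph (Fin n))
    (l : List (Fin n × Fin n)) (i : ℕ) (hi : i < l.length)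
    (hreach : ¬ H.Reachable (l.get ⟨i, hi⟩).1 (l.get ⟨i, hi⟩).2)
    (hprev : ∀ (j : ℕ) (hj : j < l.length), j < i →
      H.Reachable (l.get ⟨j, hj⟩).1 (l.get ⟨j, hj⟩).2)
    (f : Fin s ↪ Fin n) (a b : Fin s) (hab : F.Adj a b)
    (hfa : f a = (l.get ⟨i, hi⟩).1) (hfb : f b = (l.get ⟨i, hi⟩).2)
    (hcopy : ∀ c d, F.Adj c d → (addEdges H (l.take (i + 1))).Adj (f c) (f d)) :
    F.IsBridge s(a, b) := by
  rw [SimpleGraph.isBridge_iff]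
  refine fun hre => hreach ?_
  rw [← hfa, ← hfb]
  refine reach_lift f (fun c d hcd => ?_) hre
  have hcd' : F.Adj c d := hcd.1
  have hne : s(c, d) ≠ s(a, b) := by
    intro h
    exact hcd.2 ((SimpleGraph.fromEdgeSet_adj _).mpr ⟨h, hcd'.ne⟩)
  have hadj := hcopy c d hcd'
  rw [addEdges_adj] at hadj
  rcases hadj with hH | ⟨⟨p, hp, he⟩, _⟩
  · exact hH.reachable
  · obtain ⟨k, hk, hki, hkp⟩ := mem_take_get l (i + 1) hp
    rcases Nat.lt_succ_iff_lt_or_eq.mp hki with hki | rfl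
    · have hr := hprev k hk hki
      rw [hkp] at hr
      rw [Sym2.eq_iff] at he
      rcases he with ⟨h1, h2⟩ | ⟨h1, h2⟩
      · rw [h1, h2]; exact hr
      · rw [h1, h2]; exact hr.symm
    · have hpe : p = l.get ⟨k, hi⟩ := hkp.symm
      rw [hpe, ← hfa, ← hfb, Sym2.eq_iff] at he
      rcases he with ⟨h1, h2⟩ | ⟨h1, h2⟩
      · exact absurd (by rw [f.injective h1, f.injective h2]) hne
      · exact absurd (by rw [f.injective h1, f.injective h2, Sym2.eq_swap]) hne

lemma conn_card {n : ℕ} {G : SimpleGraph (Fin n)} (hc : G.Connected) :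
    n - 1 ≤ G.edgeSet.ncard := by
  obtain ⟨v0⟩ := hc.nonempty
  have key : ∀ v : Fin n, v ≠ v0 → ∃ w : Fin n, G.Adj v w ∧ G.dist w v0 < G.dist v v0 := by
    intro v hv
    have hd : 0 < G.dist v v0 := hc.pos_dist_of_ne hv
    obtain ⟨p, hlen⟩ := (hc.preconnected v v0).exists_walk_length_eq_dist
    cases p with
    | nil => simp at hlen; omega
    | cons h q =>
      refine ⟨_, h, ?_⟩
      have : G.dist _ v0 ≤ q.length := SimpleGraph.dist_le q
      simp [SimpleGraph.Walk.length_cons] at hlen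
      omega
  choose w hw1 hw2 using key
  have hinj : Function.Injective
      (fun v : {v : Fin n // v ≠ v0} => (⟨s(v.1, w v.1 v.2), hw1 v.1 v.2⟩ : G.edgeSet)) := by
    rintro ⟨v, hv⟩ ⟨u, hu⟩ heq
    replace heq : (v = u ∧ w v hv = w u hu) ∨ (v = w u hu ∧ w v hv = u) := Sym2.eq_iff.mp (congrArg Subtype.val heq)
    rcases heq with ⟨h1, _⟩ | ⟨h1, h2⟩
    · exact Subtype.ext h1
    · exfalso
      have d1 := hw2 v hv
      have d2 := hw2 u hu
      rw [← h1] at d2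
      rw [h2] at d1
      omega
  have hcard := Nat.card_le_card_of_injective _ hinj
  rw [Nat.card_eq_fintype_card] at hcard
  have : Fintype.card {v : Fin n // v ≠ v0} = n - 1 := by
    simp [Fintype.card_subtype_compl]
  rw [this] at hcard
  rwa [Nat.card_coe_set_eq] at hcard

open scoped Classical in
lemma sat_connected {s n : ℕ} (F : SimpleGraph (Fin s)) [DecidableRel F.Adj]
    (hδ : 1 ≤ F.minDegree) (hn : s ≤ n)
    (hnb : ∀ e ∈ F.edgeSet, ¬ F.IsBridge e)
    (H : SimpleGraph (Fin n)) (hH : WeaklySaturated (⊤ : SimpleGraph (Fin n)) F H) :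
    H.Connected := by
  have hs : 0 < s := by
    by_contra h
    have hs0 : s = 0 := by omega
    subst hs0
    have : F.minDegree = 0 := by simp [SimpleGraph.minDegree]
    omega
  have hn1 : 0 < n := lt_of_lt_of_le hs hn
  have hne : Nonempty (Fin n) := ⟨⟨0, hn1⟩⟩
  obtain ⟨hle, hnc, l, hsp, htop⟩ := hH
  rw [SimpleGraph.connected_iff]
  refine ⟨?_, hne⟩
  by_contra hpc
  rw [SimpleGraph.Preconnected] at hpc
  push_neg at hpc
  obtain ⟨x, y, hxy⟩ := hpc
  have hxney : x ≠ y := fun h => hxy (h ▸ SimpleGraph.Reachable.refl x)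
  have hadj : (addEdges H l).Adj x y := by rw [htop]; simpa using hxney
  rw [addEdges_adj] at hadj
  have hP : ∃ k, ∃ hk : k < l.length,
      ¬ H.Reachable (l.get ⟨k, hk⟩).1 (l.get ⟨k, hk⟩).2 := by
    rcases hadj with hH' | ⟨⟨p, hp, he⟩, _⟩
    · exact absurd hH'.reachable hxy
    · obtain ⟨k, hk⟩ := List.mem_iff_get.mp hp
      refine ⟨k, k.isLt, fun hr => hxy ?_⟩
      rw [hk] at hr
      rw [Sym2.eq_iff] at he
      rcases he with ⟨h1, h2⟩ | ⟨h1, h2⟩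
      · rw [h1, h2]; exact hr
      · rw [h1, h2]; exact hr.symm
  set i := Nat.find hP with hidef
  obtain ⟨hi, hreach⟩ := Nat.find_spec hP
  have hprev : ∀ (j : ℕ) (hj : j < l.length), j < i →
      H.Reachable (l.get ⟨j, hj⟩).1 (l.get ⟨j, hj⟩).2 := by
    intro j hj hji
    by_contra hr
    exact Nat.find_min hP hji ⟨hj, hr⟩
  obtain ⟨f, a, b, hab, hfa, hfb, hcopy⟩ := satProcess_get F l H hsp i hi
  exact hnb s(a, b) (F.mem_edgeSet.mpr hab)
    (core F H l i hi hreach hprev f a b hab hfa hfb hcopy)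

/-- if a weakly `(K_n, F)`-saturated graph `H ≠ K_n` is disconnected then,
in any valid saturation ordering, the first added edge joining two connected components
of `H` is a cut edge of every copy of `F` it creates; consequently, if `F` has no cut
edge then every weakly `(K_n, F)`-saturated graph `H ≠ K_n` is connected and
`wsat(K_n, F) ≥ n - 1`. -/
theorem stmt9 {s n : ℕ} (F : SimpleGraph (Fin s)) [DecidableRel F.Adj]
    (hδ : 1 ≤ F.minDegree) (hn : s ≤ n)
    (H : SimpleGraph (Fin n)) (hH : WeaklySaturated (⊤ : SimpleGraph (Fin n)) F H)
    (hne : H ≠ (⊤ : SimpleGraph (Fin n))) :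
    (∀ l : List (Fin n × Fin n), SatProcess F H l → addEdges H l = ⊤ →
      ∀ i : Fin l.length,
        ¬ H.Reachable (l.get i).1 (l.get i).2 →
        (∀ j : Fin l.length, (j : ℕ) < (i : ℕ) → H.Reachable (l.get j).1 (l.get j).2) →
        ∀ (f : Fin s ↪ Fin n) (a b : Fin s), F.Adj a b →
          f a = (l.get i).1 → f b = (l.get i).2 →
          (∀ c d, F.Adj c d →
            (addEdges H (l.take ((i : ℕ) + 1))).Adj (f c) (f d)) →
          F.IsBridge s(a, b)) ∧
    ((∀ e ∈ F.edgeSet, ¬ F.IsBridge e) →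
      H.Connected ∧ n - 1 ≤ wsat (⊤ : SimpleGraph (Fin n)) F) := by
  constructor
  · intro l _ _ i hreach hprev f a b hab hfa hfb hcopy
    exact core F H l i i.isLt hreach (fun j hj hji => hprev ⟨j, hj⟩ hji)
      f a b hab hfa hfb hcopy
  · intro hnb
    refine ⟨sat_connected F hδ hn hnb H hH, ?_⟩
    refine le_csInf ⟨H.edgeSet.ncard, H, hH, rfl⟩ ?_
    rintro m ⟨H', hH', rfl⟩
    exact conn_card (sat_connected F hδ hn hnb H' hH')
end
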